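/- arXiv:2105.00958 — 4 statements merged into one kernel-verified Lean document; each statement's English description precedes it below -/
import Mathlib

section
/- Explicit fundamental solution of the effective Dirac ODE at zero momentum: Let ω > 0 and R, v_D ∈ ℝ. Define the 2×2 complex matrices L = [[ω/2, R v_D], [R v_D, −ω/2]] and, for T ∈ ℝ, P(T) = [[e^{iωT/2}, 0], [0, e^{−iωT/2}]] and D(T) = [[0, R v_D e^{iωT}], [R v_D e^{−iωT}, 0]]. Then the matrix-valued function U(T) = P(T) · exp(−i T L) satisfies U(0) = I and is differentiable with U′(T) = −i D(T) U(T) for every T ∈ ℝ; i.e., U is a fundamental solution of i U′(T) = D(T) U(T). -/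
open Matrix Complex

noncomputable section

/-- `L = [[ω/2, R v_D], [R v_D, −ω/2]]`. -/
def Lmat (ω R vD : ℝ) : Matrix (Fin 2) (Fin 2) ℂ :=
  !![(ω : ℂ) / 2, (R : ℂ) * vD; (R : ℂ) * vD, -((ω : ℂ) / 2)]

/-- `P(T) = [[e^{iωT/2}, 0], [0, e^{−iωT/2}]]`. -/
def Pmat (ω : ℝ) (T : ℝ) : Matrix (Fin 2) (Fin 2) ℂ :=
  !![Complex.exp (Complex.I * ω * T / 2), 0;
     0, Complex.exp (-(Complex.I * ω * T / 2))]

/-- `D(T) = [[0, R v_D e^{iωT}], [R v_D e^{−iωT}, 0]]`. -/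
def Dmat (ω R vD : ℝ) (T : ℝ) : Matrix (Fin 2) (Fin 2) ℂ :=
  !![0, (R : ℂ) * vD * Complex.exp (Complex.I * ω * T);
     (R : ℂ) * vD * Complex.exp (-(Complex.I * ω * T)), 0]

lemma expEntry_hasDerivAt (B : Matrix (Fin 2) (Fin 2) ℂ) (T : ℝ) (k j : Fin 2) :
    HasDerivAt (fun t : ℝ => (NormedSpace.exp ((↑t : ℂ) • B)) k j)
      ((B * NormedSpace.exp ((↑T : ℂ) • B)) k j) T := by
  letI : SeminormedRing (Matrix (Fin 2) (Fin 2) ℂ) := Matrix.linftyOpSemiNormedRing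
  letI : NormedRing (Matrix (Fin 2) (Fin 2) ℂ) := Matrix.linftyOpNormedRing
  letI : NormedAlgebra ℂ (Matrix (Fin 2) (Fin 2) ℂ) := Matrix.linftyOpNormedAlgebra
  haveI : CompleteSpace (Matrix (Fin 2) (Fin 2) ℂ) := FiniteDimensional.complete ℂ _
  have h0 : HasDerivAt (fun u : ℂ => NormedSpace.exp (u • B))
      (B * NormedSpace.exp ((T : ℂ) • B)) (T : ℂ) := hasDerivAt_exp_smul_const' (𝕂 := ℂ) B (T : ℂ)
  have h1 : HasDerivAt (fun t : ℝ => NormedSpace.exp ((↑t : ℂ) • B))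
      (B * NormedSpace.exp ((T : ℂ) • B)) T := by
    have h2 := ((h0.hasFDerivAt.restrictScalars ℝ).comp T Complex.ofRealCLM.hasFDerivAt).hasDerivAt
    exact h2.congr_deriv (show _ = B * NormedSpace.exp ((T : ℂ) • B) from by
      change (1 : ℂ) • (B * NormedSpace.exp ((T : ℂ) • B)) = _; exact one_smul _ _)
  let l : Matrix (Fin 2) (Fin 2) ℂ →ₗ[ℝ] ℂ :=
    { toFun := fun M => M k j, map_add' := fun _ _ => rfl, map_smul' := fun _ _ => rfl }
  have := (LinearMap.toContinuousLinearMap l).hasFDerivAt.comp_hasDerivAt T h1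
  exact this

lemma pdiag_hasDerivAt (c : ℂ) (T : ℝ) :
    HasDerivAt (fun t : ℝ => Complex.exp (c * t)) (c * Complex.exp (c * T)) T := by
  have h : HasDerivAt (fun t : ℝ => c * (t : ℂ)) c T := by
    simpa using (Complex.ofRealCLM.hasDerivAt (x := T)).const_mul c
  simpa [mul_comm] using h.cexp


/-- **Explicit fundamental solution of the effective Dirac ODE at zero momentum**:
`U(T) = P(T) · exp(−iTL)` satisfies `U(0) = I` and `U′(T) = −i D(T) U(T)` for every `T`
(derivatives taken entrywise); i.e. `U` is a fundamental solution of `i U′ = D(T) U`. -/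
theorem fundamental_solution_zero_momentum
    (ω R vD : ℝ) (hω : 0 < ω)
    (U : ℝ → Matrix (Fin 2) (Fin 2) ℂ)
    (hU : ∀ T : ℝ, U T = Pmat ω T * NormedSpace.exp ((-(Complex.I * T)) • Lmat ω R vD)) :
    U 0 = 1 ∧
    ∀ T : ℝ, ∀ i j : Fin 2,
      HasDerivAt (fun t : ℝ => U t i j) (((-Complex.I) • (Dmat ω R vD T * U T)) i j) T := by
  set B : Matrix (Fin 2) (Fin 2) ℂ := (-Complex.I) • Lmat ω R vD with hB
  have hsm : ∀ t : ℝ, (-(Complex.I * t)) • Lmat ω R vD = (↑t : ℂ) • B := by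
    intro t; rw [hB, smul_smul]; congr 1; ring
  constructor
  · rw [hU 0]
    simp [Pmat, NormedSpace.exp_zero, Matrix.one_fin_two]
  · intro T i j
    set E : ℝ → Matrix (Fin 2) (Fin 2) ℂ := fun t => NormedSpace.exp ((↑t : ℂ) • B) with hE
    have hfun : (fun t : ℝ => U t i j) = fun t : ℝ => (Pmat ω t * E t) i j := by
      funext t; rw [hU t, hsm t]
    rw [hfun, hU T, hsm T]
    have hDE := fun k => expEntry_hasDerivAt B T k j
    fin_cases i
    · -- i = 0
      have hmain := ((pdiag_hasDerivAt (Complex.I * ω / 2) T).mul (hDE 0)).add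
        ((hasDerivAt_const T (0:ℂ)).mul (hDE 1))
      have key : HasDerivAt (fun t : ℝ => (Pmat ω t * E t) 0 j)
          (((-Complex.I) • (Dmat ω R vD T * (Pmat ω T * E T))) 0 j) T := by
        have heq : (fun t : ℝ => (Pmat ω t * E t) 0 j)
            = fun t : ℝ => Complex.exp (Complex.I * ω / 2 * (t:ℂ)) * E t 0 j + 0 * E t 1 j := by
          funext t
          rw [show Complex.I * ω / 2 * (t:ℂ) = Complex.I * ω * t / 2 by ring]
          simp [Pmat, Matrix.mul_apply, Fin.sum_univ_two]
        rw [heq]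
        refine hmain.congr_deriv ?_
        have hB00 : B 0 0 = -(Complex.I * ((ω:ℂ)/2)) := by simp [hB, Lmat]
        have hB01 : B 0 1 = -(Complex.I * ((R:ℂ)*vD)) := by simp [hB, Lmat]
        have hB10 : B 1 0 = -(Complex.I * ((R:ℂ)*vD)) := by simp [hB, Lmat]
        have hB11 : B 1 1 = Complex.I * ((ω:ℂ)/2) := by simp [hB, Lmat]
        have hsplit : Complex.exp (Complex.I * ω * T) =
            Complex.exp (Complex.I * ω * T / 2) * Complex.exp (Complex.I * ω * T / 2) := by
          rw [← Complex.exp_add]; ring_nf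
        have hc : Complex.exp (Complex.I * (ω:ℂ) / 2 * T) = Complex.exp (Complex.I * ω * T / 2) := by
          ring_nf
        have hinv : Complex.exp (Complex.I * ω * T / 2) * Complex.exp (-(Complex.I * ω * T / 2))
            = 1 := by rw [← Complex.exp_add]; simp
        have hTB : (T:ℂ) • B = T • B := by rw [Complex.coe_smul]
        simp [Matrix.mul_apply, Fin.sum_univ_two, Matrix.smul_apply, smul_eq_mul, hE,
          Pmat, Dmat, hB00, hB01, hB10, hB11, hsplit, hc, hTB, Matrix.vecMul,
          dotProduct]
        linear_combination (Complex.I * R * vD * Complex.exp (Complex.I * ω * T / 2) *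
          NormedSpace.exp (T • B) 1 j) * hinv
      exact key
    · -- i = 1
      have hmain := ((hasDerivAt_const T (0:ℂ)).mul (hDE 0)).add
        ((pdiag_hasDerivAt (-(Complex.I * ω / 2)) T).mul (hDE 1))
      have key : HasDerivAt (fun t : ℝ => (Pmat ω t * E t) 1 j)
          (((-Complex.I) • (Dmat ω R vD T * (Pmat ω T * E T))) 1 j) T := by
        have heq : (fun t : ℝ => (Pmat ω t * E t) 1 j)
            = fun t : ℝ => 0 * E t 0 j + Complex.exp (-(Complex.I * ω / 2) * (t:ℂ)) * E t 1 j := by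
          funext t
          rw [show -(Complex.I * ω / 2) * (t:ℂ) = -(Complex.I * ω * t / 2) by ring]
          simp [Pmat, Matrix.mul_apply, Fin.sum_univ_two]
        rw [heq]
        refine hmain.congr_deriv ?_
        have hB00 : B 0 0 = -(Complex.I * ((ω:ℂ)/2)) := by simp [hB, Lmat]
        have hB01 : B 0 1 = -(Complex.I * ((R:ℂ)*vD)) := by simp [hB, Lmat]
        have hB10 : B 1 0 = -(Complex.I * ((R:ℂ)*vD)) := by simp [hB, Lmat]
        have hB11 : B 1 1 = Complex.I * ((ω:ℂ)/2) := by simp [hB, Lmat]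
        have hsplit : Complex.exp (-(Complex.I * ω * T)) =
            Complex.exp (-(Complex.I * ω * T / 2)) * Complex.exp (-(Complex.I * ω * T / 2)) := by
          rw [← Complex.exp_add]; ring_nf
        have hc : Complex.exp (-(Complex.I * (ω:ℂ) / 2) * T)
            = Complex.exp (-(Complex.I * ω * T / 2)) := by ring_nf
        have hinv : Complex.exp (Complex.I * ω * T / 2) * Complex.exp (-(Complex.I * ω * T / 2))
            = 1 := by rw [← Complex.exp_add]; simp
        have hTB : (T:ℂ) • B = T • B := by rw [Complex.coe_smul]
        have hc2 : Complex.exp (-(Complex.I * (ω:ℂ) / 2 * T))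
            = Complex.exp (-(Complex.I * ω * T / 2)) := by ring_nf
        simp [Matrix.mul_apply, Fin.sum_univ_two, Matrix.smul_apply, smul_eq_mul, hE,
          Pmat, Dmat, hB00, hB01, hB10, hB11, hsplit, hc, hc2, hTB, Matrix.vecMul,
          dotProduct]
        linear_combination (Complex.I * R * vD * Complex.exp (-(Complex.I * ω * T / 2)) *
          NormedSpace.exp (T • B) 0 j) * hinv
      exact key
end
end

section
/- Floquet multipliers at zero momentum (from the proof of Proposition 3.4): Let ω > 0 and R, v_D ∈ ℝ, set T_per = 2π/ω, and let D(T) = [[0, R v_D e^{iωT}], [R v_D e^{−iωT}, 0]]. If U : ℝ → M₂(ℂ) is a fundamental solution of i U′(T) = D(T) U(T), then the spectrum of the monodromy matrix U(T_per) equals { e^{i μ T_per}, e^{−i μ T_per} }, where μ = ½ (√(ω² + 4 R² v_D²) − ω). -/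
open Matrix Complex

noncomputable section

/-- `U : ℝ → M₂(ℂ)` is a fundamental solution of `i U′(T) = D(T) U(T)`:
`U(0) = I` and (entrywise) `U′(T) = −i D(T) U(T)` for every `T`. -/
def IsFundamentalSolution (D U : ℝ → Matrix (Fin 2) (Fin 2) ℂ) : Prop :=
  U 0 = 1 ∧
  ∀ T : ℝ, ∀ i j : Fin 2,
    HasDerivAt (fun t : ℝ => U t i j) (((-Complex.I) • (D T * U T)) i j) T

namespace FloquetAux

/-- half of the Rabi frequency -/
def Lc (ω R vD : ℝ) : ℝ := Real.sqrt (ω ^ 2 + 4 * R ^ 2 * vD ^ 2) / 2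

def Yc (ω R vD : ℝ) (t : ℝ) : ℝ := Real.cos (Lc ω R vD * t)

def Ys (ω R vD : ℝ) (t : ℝ) : ℝ := Real.sin (Lc ω R vD * t) / Lc ω R vD

/-- Explicit inverse of the fundamental solution. -/
def Y (ω R vD : ℝ) (t : ℝ) : Matrix (Fin 2) (Fin 2) ℂ :=
  !![((Yc ω R vD t : ℂ) + Complex.I * ω / 2 * (Ys ω R vD t : ℂ)) *
       Complex.exp (-(Complex.I * ω * t / 2)),
     Complex.I * R * vD * (Ys ω R vD t : ℂ) * Complex.exp (Complex.I * ω * t / 2);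
     Complex.I * R * vD * (Ys ω R vD t : ℂ) * Complex.exp (-(Complex.I * ω * t / 2)),
     ((Yc ω R vD t : ℂ) - Complex.I * ω / 2 * (Ys ω R vD t : ℂ)) *
       Complex.exp (Complex.I * ω * t / 2)]

variable {ω R vD : ℝ}

lemma Lc_pos (hω : 0 < ω) : 0 < Lc ω R vD := by
  have h1 : (0:ℝ) < ω ^ 2 + 4 * R ^ 2 * vD ^ 2 := by positivity
  have := Real.sqrt_pos.mpr h1
  unfold Lc; linarith

lemma Lc_sq (ω R vD : ℝ) : Lc ω R vD ^ 2 = ω ^ 2 / 4 + R ^ 2 * vD ^ 2 := by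
  have h1 : (0:ℝ) ≤ ω ^ 2 + 4 * R ^ 2 * vD ^ 2 := by positivity
  unfold Lc
  rw [div_pow, Real.sq_sqrt h1]
  ring

lemma Lc_sq_c (ω R vD : ℝ) : (Lc ω R vD : ℂ) ^ 2 = (ω:ℂ) ^ 2 / 4 + (R:ℂ) ^ 2 * (vD:ℂ) ^ 2 := by
  exact_mod_cast Lc_sq ω R vD

lemma pyth (hω : 0 < ω) (t : ℝ) :
    (Yc ω R vD t : ℂ) ^ 2 + (Lc ω R vD : ℂ) ^ 2 * (Ys ω R vD t : ℂ) ^ 2 = 1 := by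
  have hL := (Lc_pos (R := R) (vD := vD) hω).ne'
  have h : Yc ω R vD t ^ 2 + Lc ω R vD ^ 2 * Ys ω R vD t ^ 2 = 1 := by
    unfold Yc Ys
    field_simp
    exact Real.cos_sq_add_sin_sq _
  exact_mod_cast h

lemma hasDerivAt_Yc (hω : 0 < ω) (t : ℝ) :
    HasDerivAt (fun s : ℝ => (Yc ω R vD s : ℂ))
      ((-(Lc ω R vD ^ 2) * Ys ω R vD t : ℝ) : ℂ) t := by
  have hL := (Lc_pos (R := R) (vD := vD) hω).ne'
  have h1 : HasDerivAt (fun s : ℝ => Lc ω R vD * s) (Lc ω R vD) t := by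
    simpa using (hasDerivAt_id t).const_mul (Lc ω R vD)
  have h2 : HasDerivAt (fun s : ℝ => Yc ω R vD s)
      (-(Lc ω R vD ^ 2) * Ys ω R vD t) t := by
    have := (Real.hasDerivAt_cos (Lc ω R vD * t)).comp t h1
    refine HasDerivAt.congr_deriv this ?_
    unfold Ys
    field_simp
  exact h2.ofReal_comp

lemma hasDerivAt_Ys (hω : 0 < ω) (t : ℝ) :
    HasDerivAt (fun s : ℝ => (Ys ω R vD s : ℂ)) ((Yc ω R vD t : ℝ) : ℂ) t := by
  have hL := (Lc_pos (R := R) (vD := vD) hω).ne'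
  have h1 : HasDerivAt (fun s : ℝ => Lc ω R vD * s) (Lc ω R vD) t := by
    simpa using (hasDerivAt_id t).const_mul (Lc ω R vD)
  have h2 : HasDerivAt (fun s : ℝ => Ys ω R vD s) (Yc ω R vD t) t := by
    have := ((Real.hasDerivAt_sin (Lc ω R vD * t)).comp t h1).div_const (Lc ω R vD)
    refine HasDerivAt.congr_deriv this ?_
    unfold Yc
    field_simp
  exact h2.ofReal_comp

lemma hasDerivAt_exp_pos (ω : ℝ) (t : ℝ) :
    HasDerivAt (fun s : ℝ => Complex.exp (Complex.I * ω * s / 2))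
      (Complex.exp (Complex.I * ω * t / 2) * (Complex.I * ω / 2)) t := by
  have hid : HasDerivAt (fun s : ℝ => (s : ℂ)) 1 t := by
    simpa using (hasDerivAt_id t).ofReal_comp
  have hin : HasDerivAt (fun s : ℝ => Complex.I * ω * s / 2) (Complex.I * ω / 2) t := by
    simpa using (hid.const_mul (Complex.I * ω)).div_const 2
  exact hin.cexp

lemma hasDerivAt_exp_neg (ω : ℝ) (t : ℝ) :
    HasDerivAt (fun s : ℝ => Complex.exp (-(Complex.I * ω * s / 2)))
      (Complex.exp (-(Complex.I * ω * t / 2)) * (-(Complex.I * ω / 2))) t := by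
  have hid : HasDerivAt (fun s : ℝ => (s : ℂ)) 1 t := by
    simpa using (hasDerivAt_id t).ofReal_comp
  have hin : HasDerivAt (fun s : ℝ => -(Complex.I * ω * s / 2)) (-(Complex.I * ω / 2)) t := by
    simpa using ((hid.const_mul (Complex.I * ω)).div_const 2).fun_neg
  exact hin.cexp

lemma Y_zero (ω R vD : ℝ) : Y ω R vD 0 = 1 := by
  ext i j
  fin_cases i <;> fin_cases j <;>
    simp [Y, Yc, Ys, Matrix.one_apply]

lemma Y_deriv (hω : 0 < ω) (t : ℝ) (i j : Fin 2) :
    HasDerivAt (fun s : ℝ => Y ω R vD s i j)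
      ((Complex.I • (Y ω R vD t * Dmat ω R vD t)) i j) t := by
  have hc := hasDerivAt_Yc (R := R) (vD := vD) hω t
  have hs := hasDerivAt_Ys (R := R) (vD := vD) hω t
  have hep := hasDerivAt_exp_pos ω t
  have hem := hasDerivAt_exp_neg ω t
  have hEF : Complex.exp (Complex.I * ω * t / 2) * Complex.exp (-(Complex.I * ω * t / 2)) = 1 := by
    rw [← Complex.exp_add]; simp
  have hE2 : Complex.exp (Complex.I * ω * t) =
      Complex.exp (Complex.I * ω * t / 2) * Complex.exp (Complex.I * ω * t / 2) := by
    rw [← Complex.exp_add]; ring_nf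
  have hF2 : Complex.exp (-(Complex.I * ω * t)) =
      Complex.exp (-(Complex.I * ω * t / 2)) * Complex.exp (-(Complex.I * ω * t / 2)) := by
    rw [← Complex.exp_add]; ring_nf
  have hL2 := Lc_sq_c ω R vD
  fin_cases i <;> fin_cases j
  · have H := (hc.fun_add (hs.const_mul (Complex.I * (ω:ℂ) / 2))).fun_mul hem
    refine HasDerivAt.congr_deriv H ?_
    symm
    simp only [Fin.mk_zero, Fin.mk_one, Matrix.smul_apply, Matrix.mul_apply, Fin.sum_univ_two,
      Y, Dmat, Matrix.cons_val', Matrix.cons_val_zero, Matrix.cons_val_one, Matrix.head_cons,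
      Matrix.head_fin_const, Matrix.empty_val', Matrix.cons_val_fin_one, Matrix.of_apply,
      zero_mul, mul_zero, add_zero, zero_add, smul_eq_mul]
    rw [hF2]
    push_cast
    linear_combination (-((R:ℂ)^2*(vD:ℂ)^2*(Ys ω R vD t : ℂ)*Complex.exp (-(Complex.I * (ω:ℂ) * (t:ℂ) / 2)))) * hEF + ((Ys ω R vD t : ℂ)*Complex.exp (-(Complex.I * (ω:ℂ) * (t:ℂ) / 2))) * hL2 +
      ((R:ℂ)^2*(vD:ℂ)^2*(Ys ω R vD t : ℂ)*Complex.exp (Complex.I * (ω:ℂ) * (t:ℂ) / 2)*Complex.exp (-(Complex.I * (ω:ℂ) * (t:ℂ) / 2))^2 + ((ω:ℂ)^2/4)*(Ys ω R vD t : ℂ)*Complex.exp (-(Complex.I * (ω:ℂ) * (t:ℂ) / 2))) * Complex.I_sq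
  · have H := (hs.const_mul (Complex.I * (R:ℂ) * (vD:ℂ))).fun_mul hep
    refine HasDerivAt.congr_deriv H ?_
    symm
    simp only [Fin.mk_zero, Fin.mk_one, Matrix.smul_apply, Matrix.mul_apply, Fin.sum_univ_two,
      Y, Dmat, Matrix.cons_val', Matrix.cons_val_zero, Matrix.cons_val_one, Matrix.head_cons,
      Matrix.head_fin_const, Matrix.empty_val', Matrix.cons_val_fin_one, Matrix.of_apply,
      zero_mul, mul_zero, add_zero, zero_add, smul_eq_mul]
    rw [hE2]
    linear_combination ((Complex.I*(R:ℂ)*(vD:ℂ)*(Yc ω R vD t : ℂ) + Complex.I^2*(R:ℂ)*(vD:ℂ)*((ω:ℂ)/2)*(Ys ω R vD t : ℂ))*Complex.exp (Complex.I * (ω:ℂ) * (t:ℂ) / 2)) * hEF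
  · have H := (hs.const_mul (Complex.I * (R:ℂ) * (vD:ℂ))).fun_mul hem
    refine HasDerivAt.congr_deriv H ?_
    symm
    simp only [Fin.mk_zero, Fin.mk_one, Matrix.smul_apply, Matrix.mul_apply, Fin.sum_univ_two,
      Y, Dmat, Matrix.cons_val', Matrix.cons_val_zero, Matrix.cons_val_one, Matrix.head_cons,
      Matrix.head_fin_const, Matrix.empty_val', Matrix.cons_val_fin_one, Matrix.of_apply,
      zero_mul, mul_zero, add_zero, zero_add, smul_eq_mul]
    rw [hF2]
    linear_combination ((Complex.I*(R:ℂ)*(vD:ℂ)*(Yc ω R vD t : ℂ) - Complex.I^2*(R:ℂ)*(vD:ℂ)*((ω:ℂ)/2)*(Ys ω R vD t : ℂ))*Complex.exp (-(Complex.I * (ω:ℂ) * (t:ℂ) / 2))) * hEF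
  · have H := (hc.fun_sub (hs.const_mul (Complex.I * (ω:ℂ) / 2))).fun_mul hep
    refine HasDerivAt.congr_deriv H ?_
    symm
    simp only [Fin.mk_zero, Fin.mk_one, Matrix.smul_apply, Matrix.mul_apply, Fin.sum_univ_two,
      Y, Dmat, Matrix.cons_val', Matrix.cons_val_zero, Matrix.cons_val_one, Matrix.head_cons,
      Matrix.head_fin_const, Matrix.empty_val', Matrix.cons_val_fin_one, Matrix.of_apply,
      zero_mul, mul_zero, add_zero, zero_add, smul_eq_mul]
    rw [hE2]
    push_cast
    linear_combination (-((R:ℂ)^2*(vD:ℂ)^2*(Ys ω R vD t : ℂ)*Complex.exp (Complex.I * (ω:ℂ) * (t:ℂ) / 2))) * hEF + ((Ys ω R vD t : ℂ)*Complex.exp (Complex.I * (ω:ℂ) * (t:ℂ) / 2)) * hL2 +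
      ((R:ℂ)^2*(vD:ℂ)^2*(Ys ω R vD t : ℂ)*Complex.exp (-(Complex.I * (ω:ℂ) * (t:ℂ) / 2))*Complex.exp (Complex.I * (ω:ℂ) * (t:ℂ) / 2)^2 + ((ω:ℂ)^2/4)*(Ys ω R vD t : ℂ)*Complex.exp (Complex.I * (ω:ℂ) * (t:ℂ) / 2)) * Complex.I_sq

lemma YU_one (hω : 0 < ω) {U : ℝ → Matrix (Fin 2) (Fin 2) ℂ}
    (hU : IsFundamentalSolution (Dmat ω R vD) U) (t : ℝ) :
    Y ω R vD t * U t = 1 := by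
  obtain ⟨hU0, hU'⟩ := hU
  ext i j
  have hf : ∀ s : ℝ, HasDerivAt (fun u : ℝ => (Y ω R vD u * U u) i j) 0 s := by
    intro s
    have h1 : HasDerivAt (fun u : ℝ => ∑ k, Y ω R vD u i k * U u k j)
        (∑ k, ((Complex.I • (Y ω R vD s * Dmat ω R vD s)) i k * U s k j +
          Y ω R vD s i k * (((-Complex.I) • (Dmat ω R vD s * U s)) k j))) s :=
      HasDerivAt.fun_sum fun k _ => (Y_deriv hω s i k).fun_mul (hU' s k j)
    have h2 : (∑ k : Fin 2, ((Complex.I • (Y ω R vD s * Dmat ω R vD s)) i k * U s k j +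
          Y ω R vD s i k * (((-Complex.I) • (Dmat ω R vD s * U s)) k j))) = 0 := by
      simp only [Matrix.smul_apply, Matrix.mul_apply, Fin.sum_univ_two, smul_eq_mul, neg_mul]
      ring
    rw [h2] at h1
    simpa [Matrix.mul_apply] using h1
  have hdiff : Differentiable ℝ (fun u : ℝ => (Y ω R vD u * U u) i j) :=
    fun s => (hf s).differentiableAt
  calc (Y ω R vD t * U t) i j
      = (Y ω R vD 0 * U 0) i j :=
        is_const_of_deriv_eq_zero hdiff (fun s => (hf s).deriv) t 0
    _ = (1 : Matrix (Fin 2) (Fin 2) ℂ) i j := by rw [hU0, Y_zero, one_mul]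

end FloquetAux

open FloquetAux

/-- **Floquet multipliers at zero momentum** (from the proof of Proposition 3.4):
for `T_per = 2π/ω`, the spectrum of the monodromy matrix `U(T_per)` of
`i U′ = D(T) U` equals `{e^{iμT_per}, e^{−iμT_per}}` with
`μ = ½(√(ω² + 4R²v_D²) − ω)`. -/
theorem floquet_multipliers_zero_momentum
    (ω R vD : ℝ) (hω : 0 < ω)
    (Tper : ℝ) (hTper : Tper = 2 * Real.pi / ω)
    (U : ℝ → Matrix (Fin 2) (Fin 2) ℂ)
    (hU : IsFundamentalSolution (Dmat ω R vD) U) :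
    spectrum ℂ (U Tper) =
      {Complex.exp (Complex.I * ((Real.sqrt (ω ^ 2 + 4 * R ^ 2 * vD ^ 2) - ω) / 2 : ℝ) * Tper),
       Complex.exp (-(Complex.I * ((Real.sqrt (ω ^ 2 + 4 * R ^ 2 * vD ^ 2) - ω) / 2 : ℝ) * Tper))} := by
  have hL0 := (Lc_pos (ω := ω) (R := R) (vD := vD) hω).ne'
  have hL2 := Lc_sq_c ω R vD
  have hpy := pyth (ω := ω) (R := R) (vD := vD) hω Tper
  set L := Lc ω R vD with hLdef
  set C : ℂ := (Yc ω R vD Tper : ℂ) with hCdef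
  set S : ℂ := (Ys ω R vD Tper : ℂ) with hSdef
  have hωT : ω * Tper = 2 * Real.pi := by
    rw [hTper]; field_simp
  have harg : Complex.I * (ω:ℂ) * (Tper:ℂ) / 2 = (Real.pi:ℂ) * Complex.I := by
    have h2 : ((ω : ℂ) * (Tper : ℂ)) = 2 * (Real.pi : ℂ) := by
      exact_mod_cast congrArg Complex.ofReal hωT
    linear_combination (Complex.I / 2) * h2
  have hE : Complex.exp (Complex.I * (ω:ℂ) * (Tper:ℂ) / 2) = -1 := by
    rw [harg, Complex.exp_pi_mul_I]
  have hF : Complex.exp (-(Complex.I * (ω:ℂ) * (Tper:ℂ) / 2)) = -1 := by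
    rw [show -(Complex.I * (ω:ℂ) * (Tper:ℂ) / 2) = -((Real.pi:ℂ) * Complex.I) from by
      rw [harg], Complex.exp_neg, Complex.exp_pi_mul_I]
    norm_num
  have hL0c : (L : ℂ) ≠ 0 := Complex.ofReal_ne_zero.mpr hL0
  have hcosC : Complex.cos ((L:ℂ) * (Tper:ℂ)) = C := by
    rw [hCdef]; unfold Yc; rw [← hLdef]; push_cast; ring
  have hsinC : Complex.sin ((L:ℂ) * (Tper:ℂ)) = (L:ℂ) * S := by
    rw [hSdef]; unfold Ys; rw [← hLdef]; push_cast; field_simp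
  have ha : Complex.exp (Complex.I * (((Real.sqrt (ω ^ 2 + 4 * R ^ 2 * vD ^ 2) - ω) / 2 : ℝ) : ℂ)
      * Tper) = -(C + (L:ℂ) * S * Complex.I) := by
    have h1 : Complex.I * (((Real.sqrt (ω ^ 2 + 4 * R ^ 2 * vD ^ 2) - ω) / 2 : ℝ) : ℂ) * Tper =
        ((L * Tper : ℝ) : ℂ) * Complex.I + -(Complex.I * (ω:ℂ) * (Tper:ℂ) / 2) := by
      rw [hLdef]; unfold Lc; push_cast; ring
    rw [h1, Complex.exp_add, Complex.exp_mul_I, hF]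
    push_cast
    rw [hcosC, hsinC]
    ring
  have hb : Complex.exp (-(Complex.I * (((Real.sqrt (ω ^ 2 + 4 * R ^ 2 * vD ^ 2) - ω) / 2 : ℝ) : ℂ)
      * Tper)) = -(C - (L:ℂ) * S * Complex.I) := by
    have h1 : -(Complex.I * (((Real.sqrt (ω ^ 2 + 4 * R ^ 2 * vD ^ 2) - ω) / 2 : ℝ) : ℂ) * Tper) =
        ((-(L * Tper) : ℝ) : ℂ) * Complex.I + Complex.I * (ω:ℂ) * (Tper:ℂ) / 2 := by
      rw [hLdef]; unfold Lc; push_cast; ring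
    rw [h1, Complex.exp_add, Complex.exp_mul_I, hE]
    push_cast
    rw [Complex.cos_neg, Complex.sin_neg, hcosC, hsinC]
    ring
  have hYU := YU_one (ω := ω) (R := R) (vD := vD) hω hU Tper
  have hUY : U Tper * Y ω R vD Tper = 1 := mul_eq_one_comm.mp hYU
  have hdetY : (Y ω R vD Tper).det = 1 := by
    rw [Matrix.det_fin_two]
    simp only [Y, Matrix.cons_val', Matrix.cons_val_zero, Matrix.cons_val_one, Matrix.head_cons,
      Matrix.head_fin_const, Matrix.empty_val', Matrix.cons_val_fin_one, Matrix.of_apply]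
    rw [hE, hF]
    linear_combination hpy + (-(S^2)) * hL2 + (-(S^2)*((ω:ℂ)^2/4 + (R:ℂ)^2*(vD:ℂ)^2)) * Complex.I_sq
  ext z
  have hdet : ((algebraMap ℂ (Matrix (Fin 2) (Fin 2) ℂ)) z - U Tper).det =
      (z - -(C + (L:ℂ) * S * Complex.I)) * (z - -(C - (L:ℂ) * S * Complex.I)) := by
    have h1 : ((algebraMap ℂ (Matrix (Fin 2) (Fin 2) ℂ)) z - U Tper) * Y ω R vD Tper =
        z • Y ω R vD Tper - 1 := by
      rw [sub_mul, hUY, Algebra.algebraMap_eq_smul_one, smul_mul_assoc, one_mul]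
    calc ((algebraMap ℂ (Matrix (Fin 2) (Fin 2) ℂ)) z - U Tper).det
        = ((algebraMap ℂ (Matrix (Fin 2) (Fin 2) ℂ)) z - U Tper).det * (Y ω R vD Tper).det := by
          rw [hdetY, mul_one]
      _ = ((z • Y ω R vD Tper - 1) : Matrix (Fin 2) (Fin 2) ℂ).det := by
          rw [← Matrix.det_mul, h1]
      _ = (z - -(C + (L:ℂ) * S * Complex.I)) * (z - -(C - (L:ℂ) * S * Complex.I)) := by
          rw [Matrix.det_fin_two]
          simp only [Matrix.sub_apply, Matrix.smul_apply, Matrix.one_apply, Y,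
            Matrix.cons_val', Matrix.cons_val_zero, Matrix.cons_val_one, Matrix.head_cons,
            Matrix.head_fin_const, Matrix.empty_val', Matrix.cons_val_fin_one, Matrix.of_apply,
            smul_eq_mul]
          rw [hE, hF]
          norm_num
          linear_combination (z^2 - 1) * hpy + (-(z^2*S^2)) * hL2 +
            ((L:ℂ)^2*S^2 - z^2*S^2*((ω:ℂ)^2/4 + (R:ℂ)^2*(vD:ℂ)^2)) * Complex.I_sq
  rw [spectrum.mem_iff, Matrix.isUnit_iff_isUnit_det, isUnit_iff_ne_zero, not_ne_iff, hdet,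
    mul_eq_zero, sub_eq_zero, sub_eq_zero, Set.mem_insert_iff, Set.mem_singleton_iff, ha, hb]
end
end

section
/- Floquet-multiplier gap for the forced Dirac system at small momenta (Proposition 3.4, Fourier-side form): Let ω > 0 and R, v_D ∈ ℝ with R v_D ≠ 0 and R² v_D² < 2ω², and set T_per = 2π/ω. Then there exist d₀ > 0 and g > 0 such that for every ξ = (ξ₁, ξ₂) ∈ ℝ² with ‖ξ‖ ≤ d₀ and every fundamental solution U of i U′(T) = D̂(T; ξ) U(T), the spectrum of the monodromy matrix U(T_per) contains no point of the arc { e^{iy} : y ∈ ℝ, |y| ≤ g }. -/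
set_option maxHeartbeats 1000000


open Matrix Complex

noncomputable section

/-- The Fourier-side effective Dirac Hamiltonian with circularly polarized forcing:
`D̂(T; ξ) = v_D · [[0, ξ₁ + iξ₂ + R e^{iωT}], [ξ₁ − iξ₂ + R e^{−iωT}, 0]]`. -/
def Dhat (ω R vD : ℝ) (ξ₁ ξ₂ : ℝ) (T : ℝ) : Matrix (Fin 2) (Fin 2) ℂ :=
  (vD : ℂ) •
    !![0, (ξ₁ : ℂ) + Complex.I * ξ₂ + (R : ℂ) * Complex.exp (Complex.I * ω * T);
       (ξ₁ : ℂ) - Complex.I * ξ₂ + (R : ℂ) * Complex.exp (-(Complex.I * ω * T)), 0]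

lemma spec_aux (M : Matrix (Fin 2) (Fin 2) ℂ) (hdet : M 0 0 * M 1 1 - M 0 1 * M 1 0 = 1)
    (lam : ℂ) (hlam : lam ≠ 0) (ht : M 0 0 + M 1 1 ≠ lam + lam⁻¹) :
    lam ∉ spectrum ℂ M := by
  rw [spectrum.mem_iff]
  intro h
  apply h
  rw [Matrix.isUnit_iff_isUnit_det, isUnit_iff_ne_zero]
  intro hd
  apply ht
  have hdet' : (algebraMap ℂ (Matrix (Fin 2) (Fin 2) ℂ) lam - M).det
      = lam^2 - (M 0 0 + M 1 1) * lam + (M 0 0 * M 1 1 - M 0 1 * M 1 0) := by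
    rw [Matrix.det_fin_two]
    simp [Matrix.algebraMap_matrix_apply]
    ring
  rw [hdet', hdet] at hd
  have h2 : (M 0 0 + M 1 1) * lam = lam^2 + 1 := by linear_combination -hd
  field_simp
  linear_combination h2


def Wsol (ω b Ω : ℝ) (T : ℝ) : Matrix (Fin 2) (Fin 2) ℂ :=
  !![Complex.exp (Complex.I * ((ω:ℂ)/2) * T) *
       (((Real.cos (Ω*T) : ℝ) : ℂ) - (Complex.I * ((ω:ℂ)/2) / (Ω:ℂ)) * ((Real.sin (Ω*T) : ℝ) : ℂ)),
     Complex.exp (Complex.I * ((ω:ℂ)/2) * T) *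
       ((-Complex.I * (b:ℂ) / (Ω:ℂ)) * ((Real.sin (Ω*T) : ℝ) : ℂ));
     Complex.exp (-(Complex.I * ((ω:ℂ)/2) * T)) *
       ((-Complex.I * (b:ℂ) / (Ω:ℂ)) * ((Real.sin (Ω*T) : ℝ) : ℂ)),
     Complex.exp (-(Complex.I * ((ω:ℂ)/2) * T)) *
       (((Real.cos (Ω*T) : ℝ) : ℂ) + (Complex.I * ((ω:ℂ)/2) / (Ω:ℂ)) * ((Real.sin (Ω*T) : ℝ) : ℂ))]

-- building-block derivatives
lemma hasDerivAt_cosC (Ω T : ℝ) :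
    HasDerivAt (fun t : ℝ => ((Real.cos (Ω*t) : ℝ) : ℂ)) (((-Real.sin (Ω*T) * Ω : ℝ) : ℂ)) T :=
  by simpa using (((Real.hasDerivAt_cos (Ω*T)).comp T ((hasDerivAt_id T).const_mul Ω))).ofReal_comp

lemma hasDerivAt_sinC (Ω T : ℝ) :
    HasDerivAt (fun t : ℝ => ((Real.sin (Ω*t) : ℝ) : ℂ)) (((Real.cos (Ω*T) * Ω : ℝ) : ℂ)) T :=
  by simpa using (((Real.hasDerivAt_sin (Ω*T)).comp T ((hasDerivAt_id T).const_mul Ω))).ofReal_comp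

lemma hasDerivAt_expP (ω : ℝ) (T : ℝ) :
    HasDerivAt (fun t : ℝ => Complex.exp (Complex.I * ((ω:ℂ)/2) * t))
      (Complex.exp (Complex.I * ((ω:ℂ)/2) * T) * (Complex.I * ((ω:ℂ)/2))) T := by
  have h : HasDerivAt (fun t : ℝ => Complex.I * ((ω:ℂ)/2) * (t:ℂ)) (Complex.I * ((ω:ℂ)/2)) T := by
    simpa using ((hasDerivAt_id T).ofReal_comp.const_mul (Complex.I * ((ω:ℂ)/2)))
  exact h.cexp

lemma hasDerivAt_expM (ω : ℝ) (T : ℝ) :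
    HasDerivAt (fun t : ℝ => Complex.exp (-(Complex.I * ((ω:ℂ)/2) * t)))
      (Complex.exp (-(Complex.I * ((ω:ℂ)/2) * T)) * (-(Complex.I * ((ω:ℂ)/2)))) T := by
  have h : HasDerivAt (fun t : ℝ => -(Complex.I * ((ω:ℂ)/2) * (t:ℂ))) (-(Complex.I * ((ω:ℂ)/2))) T := by
    simpa [Pi.neg_def] using (((hasDerivAt_id T).ofReal_comp.const_mul (Complex.I * ((ω:ℂ)/2))).neg)
  exact h.cexp

lemma rhs00 (ω R vD ξ₁ ξ₂ T : ℝ) (X : Matrix (Fin 2) (Fin 2) ℂ) :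
    ((-Complex.I) • (Dhat ω R vD ξ₁ ξ₂ T * X)) 0 0
      = (-Complex.I) * ((vD:ℂ) * ((ξ₁:ℂ) + Complex.I * ξ₂ + (R:ℂ) * Complex.exp (Complex.I * ω * T))) * X 1 0 := by
  simp [Dhat, Matrix.smul_apply, Matrix.mul_apply, Fin.sum_univ_two, Matrix.vecMul, dotProduct]
  ring

lemma expPM (ω T : ℝ) :
    Complex.exp (Complex.I * ((ω:ℂ)/2) * T) * Complex.exp (-(Complex.I * ((ω:ℂ)/2) * T)) = 1 := by
  rw [← Complex.exp_add]
  norm_num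

lemma expE (ω T : ℝ) :
    Complex.exp (Complex.I * (ω:ℂ) * T)
      = Complex.exp (Complex.I * ((ω:ℂ)/2) * T) * Complex.exp (Complex.I * ((ω:ℂ)/2) * T) := by
  rw [← Complex.exp_add]
  congr 1
  ring

lemma expE' (ω T : ℝ) :
    Complex.exp (-(Complex.I * (ω:ℂ) * T))
      = Complex.exp (-(Complex.I * ((ω:ℂ)/2) * T)) * Complex.exp (-(Complex.I * ((ω:ℂ)/2) * T)) := by
  rw [← Complex.exp_add]
  congr 1
  ring

lemma Wsol_deriv00 (ω R vD b Ω : ℝ) (hb : b = vD * R) (hΩ : Ω ≠ 0)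
    (hΩsq : Ω^2 = ω^2/4 + b^2) (T : ℝ) :
    HasDerivAt (fun t : ℝ => Wsol ω b Ω t 0 0)
      (((-Complex.I) • (Dhat ω R vD 0 0 T * Wsol ω b Ω T)) 0 0) T := by
  rw [rhs00]
  have h := (hasDerivAt_expP ω T).mul
    ((hasDerivAt_cosC Ω T).sub ((hasDerivAt_sinC Ω T).const_mul (Complex.I * ((ω:ℂ)/2) / (Ω:ℂ))))
  have hW : ∀ i j, Wsol ω b Ω T i j = Wsol ω b Ω T i j := fun _ _ => rfl
  simp only [Wsol, Matrix.cons_val', Matrix.cons_val_zero, Matrix.cons_val_one,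
    Matrix.head_cons, Matrix.empty_val', Matrix.cons_val_fin_one, Matrix.head_fin_const, Matrix.of_apply, Pi.mul_apply, Pi.sub_apply,
    Pi.add_apply] at h ⊢
  convert h using 1
  · rfl
  · rfl
  have h1 := expPM ω T
  have hE := expE ω T
  have hΩC : (Ω:ℂ) ≠ 0 := by exact_mod_cast hΩ
  have hΩsqC : (Ω:ℂ)^2 = (ω:ℂ)^2/4 + (b:ℂ)^2 := by exact_mod_cast hΩsq
  have hbC : (b:ℂ) = (vD:ℂ) * (R:ℂ) := by exact_mod_cast hb
  rw [hE]
  push_cast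
  field_simp
  linear_combination (norm := ring_nf)
    (8*(Ω:ℂ)^2*Complex.I^2*(vD:ℂ)*(R:ℂ)*(b:ℂ)*Complex.exp (Complex.I*(ω:ℂ)*(T:ℂ)/2)*Complex.sin ((Ω:ℂ)*(T:ℂ))) * h1
    + (-8*(Ω:ℂ)^2*Complex.I^2*(b:ℂ)*Complex.exp (Complex.I*(ω:ℂ)*(T:ℂ)/2)*Complex.sin ((Ω:ℂ)*(T:ℂ))) * hbC
    + ((8*(Ω:ℂ)^2*(b:ℂ)^2 + 2*(Ω:ℂ)^2*(ω:ℂ)^2)*Complex.exp (Complex.I*(ω:ℂ)*(T:ℂ)/2)*Complex.sin ((Ω:ℂ)*(T:ℂ))) * Complex.I_sq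
    + (8*(Ω:ℂ)^2*Complex.exp (Complex.I*(ω:ℂ)*(T:ℂ)/2)*Complex.sin ((Ω:ℂ)*(T:ℂ))) * hΩsqC
    + (Complex.sin ((Ω:ℂ)*(T:ℂ))*Complex.exp (Complex.I*(ω:ℂ)*(T:ℂ)/2)*(-8*Complex.I^2*(vD:ℂ)*(R:ℂ)*(b:ℂ)*(Ω:ℂ)^2 + 4*Complex.I^2*(vD:ℂ)*(R:ℂ)*(b:ℂ))) * h1
    + (Complex.sin ((Ω:ℂ)*(T:ℂ))*Complex.exp (Complex.I*(ω:ℂ)*(T:ℂ)/2)*(8*Complex.I^2*(b:ℂ)*(Ω:ℂ)^2 - 4*Complex.I^2*(b:ℂ))) * hbC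
    + (Complex.sin ((Ω:ℂ)*(T:ℂ))*Complex.exp (Complex.I*(ω:ℂ)*(T:ℂ)/2)*(-8*(b:ℂ)^2*(Ω:ℂ)^2 + 4*(b:ℂ)^2 - 2*(ω:ℂ)^2*(Ω:ℂ)^2 + (ω:ℂ)^2)) * Complex.I_sq
    + (Complex.sin ((Ω:ℂ)*(T:ℂ))*Complex.exp (Complex.I*(ω:ℂ)*(T:ℂ)/2)*(4 - 8*(Ω:ℂ)^2)) * hΩsqC

lemma rhs01 (ω R vD ξ₁ ξ₂ T : ℝ) (X : Matrix (Fin 2) (Fin 2) ℂ) :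
    ((-Complex.I) • (Dhat ω R vD ξ₁ ξ₂ T * X)) 0 1
      = (-Complex.I) * ((vD:ℂ) * ((ξ₁:ℂ) + Complex.I * ξ₂ + (R:ℂ) * Complex.exp (Complex.I * ω * T))) * X 1 1 := by
  simp [Dhat, Matrix.smul_apply, Matrix.mul_apply, Fin.sum_univ_two, Matrix.vecMul, dotProduct]
  ring

lemma rhs10 (ω R vD ξ₁ ξ₂ T : ℝ) (X : Matrix (Fin 2) (Fin 2) ℂ) :
    ((-Complex.I) • (Dhat ω R vD ξ₁ ξ₂ T * X)) 1 0
      = (-Complex.I) * ((vD:ℂ) * ((ξ₁:ℂ) - Complex.I * ξ₂ + (R:ℂ) * Complex.exp (-(Complex.I * ω * T)))) * X 0 0 := by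
  simp [Dhat, Matrix.smul_apply, Matrix.mul_apply, Fin.sum_univ_two, Matrix.vecMul, dotProduct]
  ring

lemma rhs11 (ω R vD ξ₁ ξ₂ T : ℝ) (X : Matrix (Fin 2) (Fin 2) ℂ) :
    ((-Complex.I) • (Dhat ω R vD ξ₁ ξ₂ T * X)) 1 1
      = (-Complex.I) * ((vD:ℂ) * ((ξ₁:ℂ) - Complex.I * ξ₂ + (R:ℂ) * Complex.exp (-(Complex.I * ω * T)))) * X 0 1 := by
  simp [Dhat, Matrix.smul_apply, Matrix.mul_apply, Fin.sum_univ_two, Matrix.vecMul, dotProduct]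
  ring

lemma Wsol_deriv01 (ω R vD b Ω : ℝ) (hb : b = vD * R) (hΩ : Ω ≠ 0)
    (hΩsq : Ω^2 = ω^2/4 + b^2) (T : ℝ) :
    HasDerivAt (fun t : ℝ => Wsol ω b Ω t 0 1)
      (((-Complex.I) • (Dhat ω R vD 0 0 T * Wsol ω b Ω T)) 0 1) T := by
  rw [rhs01]
  have h := (hasDerivAt_expP ω T).mul
    ((hasDerivAt_sinC Ω T).const_mul (-Complex.I * (b:ℂ) / (Ω:ℂ)))
  simp only [Wsol, Matrix.cons_val', Matrix.cons_val_zero, Matrix.cons_val_one,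
    Matrix.head_cons, Matrix.empty_val', Matrix.cons_val_fin_one, Matrix.head_fin_const, Matrix.of_apply, Pi.mul_apply, Pi.sub_apply,
    Pi.add_apply] at h ⊢
  convert h using 1
  · rfl
  · rfl
  have h1 := expPM ω T
  have hE := expE ω T
  have hΩC : (Ω:ℂ) ≠ 0 := by exact_mod_cast hΩ
  have hΩsqC : (Ω:ℂ)^2 = (ω:ℂ)^2/4 + (b:ℂ)^2 := by exact_mod_cast hΩsq
  have hbC : (b:ℂ) = (vD:ℂ) * (R:ℂ) := by exact_mod_cast hb
  rw [hE]
  push_cast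
  field_simp
  linear_combination (norm := ring_nf)
    ((-4*(Ω:ℂ)^3*Complex.I*Complex.cos ((Ω:ℂ)*(T:ℂ)) - 2*(Ω:ℂ)^2*Complex.I^2*(ω:ℂ)*Complex.sin ((Ω:ℂ)*(T:ℂ)))*(vD:ℂ)*(R:ℂ)*Complex.exp (Complex.I*(ω:ℂ)*(T:ℂ)/2)) * h1
    + ((4*(Ω:ℂ)^3*Complex.I*Complex.cos ((Ω:ℂ)*(T:ℂ)) + 2*(Ω:ℂ)^2*Complex.I^2*(ω:ℂ)*Complex.sin ((Ω:ℂ)*(T:ℂ)))*Complex.exp (Complex.I*(ω:ℂ)*(T:ℂ)/2)) * hbC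
    + (Complex.exp (Complex.I*(ω:ℂ)*(T:ℂ)/2)*(vD:ℂ)*(R:ℂ)*(-Complex.I*(ω:ℂ)*Complex.sin ((Ω:ℂ)*(T:ℂ)) + 4*Complex.I*(Ω:ℂ)^3*Complex.cos ((Ω:ℂ)*(T:ℂ)) + 2*Complex.I^2*(ω:ℂ)*(Ω:ℂ)^2*Complex.sin ((Ω:ℂ)*(T:ℂ)) - 2*(Ω:ℂ)*Complex.cos ((Ω:ℂ)*(T:ℂ)))) * h1
    - (Complex.exp (Complex.I*(ω:ℂ)*(T:ℂ)/2)*(-Complex.I*(ω:ℂ)*Complex.sin ((Ω:ℂ)*(T:ℂ)) + 4*Complex.I*(Ω:ℂ)^3*Complex.cos ((Ω:ℂ)*(T:ℂ)) + 2*Complex.I^2*(ω:ℂ)*(Ω:ℂ)^2*Complex.sin ((Ω:ℂ)*(T:ℂ)) - 2*(Ω:ℂ)*Complex.cos ((Ω:ℂ)*(T:ℂ)))) * hbC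

lemma Wsol_deriv10 (ω R vD b Ω : ℝ) (hb : b = vD * R) (hΩ : Ω ≠ 0)
    (hΩsq : Ω^2 = ω^2/4 + b^2) (T : ℝ) :
    HasDerivAt (fun t : ℝ => Wsol ω b Ω t 1 0)
      (((-Complex.I) • (Dhat ω R vD 0 0 T * Wsol ω b Ω T)) 1 0) T := by
  rw [rhs10]
  have h := (hasDerivAt_expM ω T).mul
    ((hasDerivAt_sinC Ω T).const_mul (-Complex.I * (b:ℂ) / (Ω:ℂ)))
  simp only [Wsol, Matrix.cons_val', Matrix.cons_val_zero, Matrix.cons_val_one,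
    Matrix.head_cons, Matrix.empty_val', Matrix.cons_val_fin_one, Matrix.head_fin_const, Matrix.of_apply, Pi.mul_apply, Pi.sub_apply,
    Pi.add_apply] at h ⊢
  convert h using 1
  · rfl
  · rfl
  have h1 := expPM ω T
  have hE := expE' ω T
  have hΩC : (Ω:ℂ) ≠ 0 := by exact_mod_cast hΩ
  have hΩsqC : (Ω:ℂ)^2 = (ω:ℂ)^2/4 + (b:ℂ)^2 := by exact_mod_cast hΩsq
  have hbC : (b:ℂ) = (vD:ℂ) * (R:ℂ) := by exact_mod_cast hb
  rw [hE]
  push_cast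
  field_simp
  linear_combination (norm := ring_nf)
    ((-4*(Ω:ℂ)^3*Complex.I*Complex.cos ((Ω:ℂ)*(T:ℂ)) + 2*(Ω:ℂ)^2*Complex.I^2*(ω:ℂ)*Complex.sin ((Ω:ℂ)*(T:ℂ)))*(vD:ℂ)*(R:ℂ)*Complex.exp (-(Complex.I*(ω:ℂ)*(T:ℂ))/2)) * h1
    + ((4*(Ω:ℂ)^3*Complex.I*Complex.cos ((Ω:ℂ)*(T:ℂ)) - 2*(Ω:ℂ)^2*Complex.I^2*(ω:ℂ)*Complex.sin ((Ω:ℂ)*(T:ℂ)))*Complex.exp (-(Complex.I*(ω:ℂ)*(T:ℂ))/2)) * hbC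
    + (Complex.exp (-(Complex.I*(ω:ℂ)*(T:ℂ))/2)*(vD:ℂ)*(R:ℂ)*(Complex.I*(ω:ℂ)*Complex.sin ((Ω:ℂ)*(T:ℂ)) + 4*Complex.I*(Ω:ℂ)^3*Complex.cos ((Ω:ℂ)*(T:ℂ)) - 2*Complex.I^2*(ω:ℂ)*(Ω:ℂ)^2*Complex.sin ((Ω:ℂ)*(T:ℂ)) - 2*(Ω:ℂ)*Complex.cos ((Ω:ℂ)*(T:ℂ)))) * h1
    - (Complex.exp (-(Complex.I*(ω:ℂ)*(T:ℂ))/2)*(Complex.I*(ω:ℂ)*Complex.sin ((Ω:ℂ)*(T:ℂ)) + 4*Complex.I*(Ω:ℂ)^3*Complex.cos ((Ω:ℂ)*(T:ℂ)) - 2*Complex.I^2*(ω:ℂ)*(Ω:ℂ)^2*Complex.sin ((Ω:ℂ)*(T:ℂ)) - 2*(Ω:ℂ)*Complex.cos ((Ω:ℂ)*(T:ℂ)))) * hbC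

lemma Wsol_deriv11 (ω R vD b Ω : ℝ) (hb : b = vD * R) (hΩ : Ω ≠ 0)
    (hΩsq : Ω^2 = ω^2/4 + b^2) (T : ℝ) :
    HasDerivAt (fun t : ℝ => Wsol ω b Ω t 1 1)
      (((-Complex.I) • (Dhat ω R vD 0 0 T * Wsol ω b Ω T)) 1 1) T := by
  rw [rhs11]
  have h := (hasDerivAt_expM ω T).mul
    ((hasDerivAt_cosC Ω T).add ((hasDerivAt_sinC Ω T).const_mul (Complex.I * ((ω:ℂ)/2) / (Ω:ℂ))))
  simp only [Wsol, Matrix.cons_val', Matrix.cons_val_zero, Matrix.cons_val_one,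
    Matrix.head_cons, Matrix.empty_val', Matrix.cons_val_fin_one, Matrix.head_fin_const, Matrix.of_apply, Pi.mul_apply, Pi.sub_apply,
    Pi.add_apply] at h ⊢
  convert h using 1
  · rfl
  · rfl
  have h1 := expPM ω T
  have hE := expE' ω T
  have hΩC : (Ω:ℂ) ≠ 0 := by exact_mod_cast hΩ
  have hΩsqC : (Ω:ℂ)^2 = (ω:ℂ)^2/4 + (b:ℂ)^2 := by exact_mod_cast hΩsq
  have hbC : (b:ℂ) = (vD:ℂ) * (R:ℂ) := by exact_mod_cast hb
  rw [hE]
  push_cast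
  field_simp
  linear_combination (norm := ring_nf)
    (8*(Ω:ℂ)^2*Complex.I^2*(vD:ℂ)*(R:ℂ)*(b:ℂ)*Complex.exp (-(Complex.I*(ω:ℂ)*(T:ℂ))/2)*Complex.sin ((Ω:ℂ)*(T:ℂ))) * h1
    + (-8*(Ω:ℂ)^2*Complex.I^2*(b:ℂ)*Complex.exp (-(Complex.I*(ω:ℂ)*(T:ℂ))/2)*Complex.sin ((Ω:ℂ)*(T:ℂ))) * hbC
    + ((8*(Ω:ℂ)^2*(b:ℂ)^2 + 2*(Ω:ℂ)^2*(ω:ℂ)^2)*Complex.exp (-(Complex.I*(ω:ℂ)*(T:ℂ))/2)*Complex.sin ((Ω:ℂ)*(T:ℂ))) * Complex.I_sq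
    + (8*(Ω:ℂ)^2*Complex.exp (-(Complex.I*(ω:ℂ)*(T:ℂ))/2)*Complex.sin ((Ω:ℂ)*(T:ℂ))) * hΩsqC
    + (Complex.sin ((Ω:ℂ)*(T:ℂ))*Complex.exp (-(Complex.I*(ω:ℂ)*(T:ℂ))/2)*(-8*Complex.I^2*(vD:ℂ)*(R:ℂ)*(b:ℂ)*(Ω:ℂ)^2 + 4*Complex.I^2*(vD:ℂ)*(R:ℂ)*(b:ℂ))) * h1
    + (Complex.sin ((Ω:ℂ)*(T:ℂ))*Complex.exp (-(Complex.I*(ω:ℂ)*(T:ℂ))/2)*(8*Complex.I^2*(b:ℂ)*(Ω:ℂ)^2 - 4*Complex.I^2*(b:ℂ))) * hbC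
    + (Complex.sin ((Ω:ℂ)*(T:ℂ))*Complex.exp (-(Complex.I*(ω:ℂ)*(T:ℂ))/2)*(-8*(b:ℂ)^2*(Ω:ℂ)^2 + 4*(b:ℂ)^2 - 2*(ω:ℂ)^2*(Ω:ℂ)^2 + (ω:ℂ)^2)) * Complex.I_sq
    + (Complex.sin ((Ω:ℂ)*(T:ℂ))*Complex.exp (-(Complex.I*(ω:ℂ)*(T:ℂ))/2)*(4 - 8*(Ω:ℂ)^2)) * hΩsqC

lemma Wsol_deriv (ω R vD b Ω : ℝ) (hb : b = vD * R) (hΩ : Ω ≠ 0)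
    (hΩsq : Ω^2 = ω^2/4 + b^2) (T : ℝ) (i j : Fin 2) :
    HasDerivAt (fun t : ℝ => Wsol ω b Ω t i j)
      (((-Complex.I) • (Dhat ω R vD 0 0 T * Wsol ω b Ω T)) i j) T := by
  fin_cases i <;> fin_cases j
  · exact Wsol_deriv00 ω R vD b Ω hb hΩ hΩsq T
  · exact Wsol_deriv01 ω R vD b Ω hb hΩ hΩsq T
  · exact Wsol_deriv10 ω R vD b Ω hb hΩ hΩsq T
  · exact Wsol_deriv11 ω R vD b Ω hb hΩ hΩsq T

lemma norm_expP (ω T : ℝ) : ‖Complex.exp (Complex.I * ((ω:ℂ)/2) * T)‖ = 1 := by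
  rw [Complex.norm_exp]
  norm_num [Complex.mul_re, Complex.mul_im]

lemma norm_expM (ω T : ℝ) : ‖Complex.exp (-(Complex.I * ((ω:ℂ)/2) * T))‖ = 1 := by
  rw [Complex.norm_exp]
  norm_num [Complex.mul_re, Complex.mul_im, Complex.neg_re]

lemma norm_expE (ω T : ℝ) : ‖Complex.exp (Complex.I * (ω:ℂ) * T)‖ = 1 := by
  rw [Complex.norm_exp]
  norm_num [Complex.mul_re, Complex.mul_im]

lemma norm_expE' (ω T : ℝ) : ‖Complex.exp (-(Complex.I * (ω:ℂ) * T))‖ = 1 := by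
  rw [Complex.norm_exp]
  norm_num [Complex.mul_re, Complex.mul_im, Complex.neg_re]

lemma Wsol_bound (ω b Ω : ℝ) (hω : 0 ≤ ω) (hΩ : 0 < Ω) (T : ℝ) (i j : Fin 2) :
    ‖Wsol ω b Ω T i j‖ ≤ 1 + (ω/2 + |b|)/Ω := by
  have hsin : ‖((Real.sin (Ω*T) : ℝ) : ℂ)‖ ≤ 1 := by
    rw [Complex.norm_real, Real.norm_eq_abs]; exact Real.abs_sin_le_one _
  have hcos : ‖((Real.cos (Ω*T) : ℝ) : ℂ)‖ ≤ 1 := by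
    rw [Complex.norm_real, Real.norm_eq_abs]; exact Real.abs_cos_le_one _
  have hk : ‖Complex.I * ((ω:ℂ)/2) / (Ω:ℂ)‖ = (ω/2)/Ω := by
    rw [norm_div, norm_mul, Complex.norm_I, one_mul]
    rw [show ((ω:ℂ)/2) = ((ω/2 : ℝ) : ℂ) by push_cast; ring]
    rw [Complex.norm_real, Complex.norm_real, Real.norm_eq_abs, Real.norm_eq_abs,
      _root_.abs_of_nonneg (by positivity : (0:ℝ) ≤ ω/2), _root_.abs_of_pos hΩ]
  have hkb : ‖-Complex.I * (b:ℂ) / (Ω:ℂ)‖ = |b|/Ω := by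
    rw [norm_div, norm_mul, norm_neg, Complex.norm_I, one_mul]
    rw [Complex.norm_real, Complex.norm_real, Real.norm_eq_abs, Real.norm_eq_abs,
      _root_.abs_of_pos hΩ]
  have hsplit : (ω/2 + |b|)/Ω = (ω/2)/Ω + |b|/Ω := by ring
  have hb' : (0:ℝ) ≤ |b|/Ω := by positivity
  have hw' : (0:ℝ) ≤ (ω/2)/Ω := by positivity
  fin_cases i <;> fin_cases j
  · show ‖Complex.exp (Complex.I * ((ω:ℂ)/2) * T) *
       (((Real.cos (Ω*T) : ℝ) : ℂ) - (Complex.I * ((ω:ℂ)/2) / (Ω:ℂ)) * ((Real.sin (Ω*T) : ℝ) : ℂ))‖ ≤ _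
    rw [norm_mul, norm_expP, one_mul]
    calc ‖((Real.cos (Ω*T) : ℝ) : ℂ) - (Complex.I * ((ω:ℂ)/2) / (Ω:ℂ)) * ((Real.sin (Ω*T) : ℝ) : ℂ)‖
        ≤ ‖((Real.cos (Ω*T) : ℝ) : ℂ)‖ + ‖(Complex.I * ((ω:ℂ)/2) / (Ω:ℂ))‖ * ‖((Real.sin (Ω*T) : ℝ) : ℂ)‖ := by
          refine le_trans (norm_sub_le _ _) ?_; rw [norm_mul]
      _ ≤ 1 + (ω/2)/Ω * 1 := by rw [hk]; gcongr
      _ ≤ 1 + (ω/2 + |b|)/Ω := by rw [hsplit]; linarith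
  · show ‖Complex.exp (Complex.I * ((ω:ℂ)/2) * T) *
       ((-Complex.I * (b:ℂ) / (Ω:ℂ)) * ((Real.sin (Ω*T) : ℝ) : ℂ))‖ ≤ _
    rw [norm_mul, norm_expP, one_mul, norm_mul, hkb]
    calc |b|/Ω * ‖((Real.sin (Ω*T) : ℝ) : ℂ)‖ ≤ |b|/Ω * 1 := by gcongr
      _ ≤ 1 + (ω/2 + |b|)/Ω := by rw [hsplit]; linarith
  · show ‖Complex.exp (-(Complex.I * ((ω:ℂ)/2) * T)) *
       ((-Complex.I * (b:ℂ) / (Ω:ℂ)) * ((Real.sin (Ω*T) : ℝ) : ℂ))‖ ≤ _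
    rw [norm_mul, norm_expM, one_mul, norm_mul, hkb]
    calc |b|/Ω * ‖((Real.sin (Ω*T) : ℝ) : ℂ)‖ ≤ |b|/Ω * 1 := by gcongr
      _ ≤ 1 + (ω/2 + |b|)/Ω := by rw [hsplit]; linarith
  · show ‖Complex.exp (-(Complex.I * ((ω:ℂ)/2) * T)) *
       (((Real.cos (Ω*T) : ℝ) : ℂ) + (Complex.I * ((ω:ℂ)/2) / (Ω:ℂ)) * ((Real.sin (Ω*T) : ℝ) : ℂ))‖ ≤ _
    rw [norm_mul, norm_expM, one_mul]
    calc ‖((Real.cos (Ω*T) : ℝ) : ℂ) + (Complex.I * ((ω:ℂ)/2) / (Ω:ℂ)) * ((Real.sin (Ω*T) : ℝ) : ℂ)‖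
        ≤ ‖((Real.cos (Ω*T) : ℝ) : ℂ)‖ + ‖(Complex.I * ((ω:ℂ)/2) / (Ω:ℂ))‖ * ‖((Real.sin (Ω*T) : ℝ) : ℂ)‖ := by
          refine le_trans (norm_add_le _ _) ?_; rw [norm_mul]
      _ ≤ 1 + (ω/2)/Ω * 1 := by rw [hk]; gcongr
      _ ≤ 1 + (ω/2 + |b|)/Ω := by rw [hsplit]; linarith

lemma Wsol_zero (ω b Ω : ℝ) : Wsol ω b Ω 0 = 1 := by
  funext i j
  fin_cases i <;> fin_cases j <;>
    simp [Wsol, Matrix.one_apply]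

lemma Wsol_trace (ω b Ω Tper : ℝ) (hω : 0 < ω) (hTper : Tper = 2 * Real.pi / ω) :
    Wsol ω b Ω Tper 0 0 + Wsol ω b Ω Tper 1 1 = ((-(2 * Real.cos (Ω * Tper)) : ℝ) : ℂ) := by
  have hω' : (ω:ℂ) ≠ 0 := by exact_mod_cast hω.ne'
  have harg : Complex.I * ((ω:ℂ)/2) * (Tper:ℝ) = Real.pi * Complex.I := by
    rw [hTper]
    push_cast
    field_simp
  have hP : Complex.exp (Complex.I * ((ω:ℂ)/2) * (Tper:ℝ)) = -1 := by
    rw [harg, Complex.exp_pi_mul_I]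
  have hM : Complex.exp (-(Complex.I * ((ω:ℂ)/2) * (Tper:ℝ))) = -1 := by
    rw [harg, Complex.exp_neg, Complex.exp_pi_mul_I]
    norm_num
  show Complex.exp (Complex.I * ((ω:ℂ)/2) * Tper) *
       (((Real.cos (Ω*Tper) : ℝ) : ℂ) - (Complex.I * ((ω:ℂ)/2) / (Ω:ℂ)) * ((Real.sin (Ω*Tper) : ℝ) : ℂ))
     + Complex.exp (-(Complex.I * ((ω:ℂ)/2) * Tper)) *
       (((Real.cos (Ω*Tper) : ℝ) : ℂ) + (Complex.I * ((ω:ℂ)/2) / (Ω:ℂ)) * ((Real.sin (Ω*Tper) : ℝ) : ℂ)) = _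
  rw [hP, hM]
  push_cast
  ring

lemma znorm (ξ₁ ξ₂ : ℝ) :
    ‖(ξ₁:ℂ) + Complex.I * ξ₂‖ = Real.sqrt (ξ₁^2 + ξ₂^2) := by
  rw [Complex.norm_def, Complex.normSq_apply]
  norm_num [Complex.add_re, Complex.add_im, Complex.mul_re, Complex.mul_im]
  ring_nf

lemma znorm' (ξ₁ ξ₂ : ℝ) :
    ‖(ξ₁:ℂ) - Complex.I * ξ₂‖ = Real.sqrt (ξ₁^2 + ξ₂^2) := by
  rw [Complex.norm_def, Complex.normSq_apply]
  norm_num [Complex.sub_re, Complex.sub_im, Complex.mul_re, Complex.mul_im]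
  ring_nf

lemma inner_bd (vD d R N Cw : ℝ) (z E F W : ℂ)
    (hd : 0 ≤ d) (hN : 0 ≤ N) (hCw : 0 ≤ Cw)
    (hz : ‖z‖ ≤ d) (hE : ‖E‖ = 1) (hF : ‖F‖ ≤ N) (hW : ‖W‖ ≤ Cw) :
    ‖(-Complex.I) * (vD:ℂ) * ((z + (R:ℂ)*E) * F + z * W)‖
      ≤ (|vD| * (d + |R|)) * N + |vD| * d * Cw := by
  have hvD : ‖(vD:ℂ)‖ = |vD| := by rw [Complex.norm_real, Real.norm_eq_abs]
  have hR : ‖(R:ℂ)‖ = |R| := by rw [Complex.norm_real, Real.norm_eq_abs]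
  have hzE : ‖z + (R:ℂ)*E‖ ≤ d + |R| := by
    refine le_trans (norm_add_le _ _) ?_
    rw [norm_mul, hE, hR, mul_one]
    gcongr
  rw [norm_mul, norm_mul, norm_neg, Complex.norm_I, one_mul, hvD]
  calc |vD| * ‖(z + (R:ℂ)*E) * F + z * W‖
      ≤ |vD| * (‖(z + (R:ℂ)*E) * F‖ + ‖z * W‖) := by
        gcongr
        exact norm_add_le _ _
    _ = |vD| * (‖z + (R:ℂ)*E‖ * ‖F‖ + ‖z‖ * ‖W‖) := by rw [norm_mul, norm_mul]
    _ ≤ |vD| * ((d + |R|) * N + d * Cw) := by gcongr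
    _ = (|vD| * (d + |R|)) * N + |vD| * d * Cw := by ring

lemma entry_bound (ω R vD ξ₁ ξ₂ T : ℝ) (UU WW : Matrix (Fin 2) (Fin 2) ℂ) (d Cw N : ℝ)
    (hd : 0 ≤ d) (hCw : 0 ≤ Cw) (hN : 0 ≤ N)
    (hz : Real.sqrt (ξ₁^2 + ξ₂^2) ≤ d)
    (hW : ∀ i j, ‖WW i j‖ ≤ Cw)
    (hF : ∀ i j, ‖UU i j - WW i j‖ ≤ N)
    (i j : Fin 2) :
    ‖((-Complex.I) • (Dhat ω R vD ξ₁ ξ₂ T * UU)) i j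
      - ((-Complex.I) • (Dhat ω R vD 0 0 T * WW)) i j‖
      ≤ (|vD| * (d + |R|)) * N + |vD| * d * Cw := by
  have hz1 : ‖(ξ₁:ℂ) + Complex.I * ξ₂‖ ≤ d := by rw [znorm]; exact hz
  have hz2 : ‖(ξ₁:ℂ) - Complex.I * ξ₂‖ ≤ d := by rw [znorm']; exact hz
  fin_cases i <;> fin_cases j <;> simp only [Fin.zero_eta, Fin.mk_one, Fin.isValue]
  · rw [rhs00, rhs00, show
      (-Complex.I) * ((vD:ℂ) * ((ξ₁:ℂ) + Complex.I * ξ₂ + (R:ℂ) * Complex.exp (Complex.I * ω * T))) * UU 1 0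
        - (-Complex.I) * ((vD:ℂ) * (((0:ℝ):ℂ) + Complex.I * ((0:ℝ):ℂ) + (R:ℂ) * Complex.exp (Complex.I * ω * T))) * WW 1 0
      = (-Complex.I) * (vD:ℂ) * ((((ξ₁:ℂ) + Complex.I * ξ₂) + (R:ℂ) * Complex.exp (Complex.I * ω * T)) * (UU 1 0 - WW 1 0)
          + ((ξ₁:ℂ) + Complex.I * ξ₂) * WW 1 0) by push_cast; ring]
    exact inner_bd vD d R N Cw _ _ _ _ hd hN hCw hz1 (norm_expE ω T) (hF 1 0) (hW 1 0)
  · rw [rhs01, rhs01, show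
      (-Complex.I) * ((vD:ℂ) * ((ξ₁:ℂ) + Complex.I * ξ₂ + (R:ℂ) * Complex.exp (Complex.I * ω * T))) * UU 1 1
        - (-Complex.I) * ((vD:ℂ) * (((0:ℝ):ℂ) + Complex.I * ((0:ℝ):ℂ) + (R:ℂ) * Complex.exp (Complex.I * ω * T))) * WW 1 1
      = (-Complex.I) * (vD:ℂ) * ((((ξ₁:ℂ) + Complex.I * ξ₂) + (R:ℂ) * Complex.exp (Complex.I * ω * T)) * (UU 1 1 - WW 1 1)
          + ((ξ₁:ℂ) + Complex.I * ξ₂) * WW 1 1) by push_cast; ring]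
    exact inner_bd vD d R N Cw _ _ _ _ hd hN hCw hz1 (norm_expE ω T) (hF 1 1) (hW 1 1)
  · rw [rhs10, rhs10, show
      (-Complex.I) * ((vD:ℂ) * ((ξ₁:ℂ) - Complex.I * ξ₂ + (R:ℂ) * Complex.exp (-(Complex.I * ω * T)))) * UU 0 0
        - (-Complex.I) * ((vD:ℂ) * (((0:ℝ):ℂ) - Complex.I * ((0:ℝ):ℂ) + (R:ℂ) * Complex.exp (-(Complex.I * ω * T)))) * WW 0 0
      = (-Complex.I) * (vD:ℂ) * ((((ξ₁:ℂ) - Complex.I * ξ₂) + (R:ℂ) * Complex.exp (-(Complex.I * ω * T))) * (UU 0 0 - WW 0 0)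
          + ((ξ₁:ℂ) - Complex.I * ξ₂) * WW 0 0) by push_cast; ring]
    exact inner_bd vD d R N Cw _ _ _ _ hd hN hCw hz2 (norm_expE' ω T) (hF 0 0) (hW 0 0)
  · rw [rhs11, rhs11, show
      (-Complex.I) * ((vD:ℂ) * ((ξ₁:ℂ) - Complex.I * ξ₂ + (R:ℂ) * Complex.exp (-(Complex.I * ω * T)))) * UU 0 1
        - (-Complex.I) * ((vD:ℂ) * (((0:ℝ):ℂ) - Complex.I * ((0:ℝ):ℂ) + (R:ℂ) * Complex.exp (-(Complex.I * ω * T)))) * WW 0 1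
      = (-Complex.I) * (vD:ℂ) * ((((ξ₁:ℂ) - Complex.I * ξ₂) + (R:ℂ) * Complex.exp (-(Complex.I * ω * T))) * (UU 0 1 - WW 0 1)
          + ((ξ₁:ℂ) - Complex.I * ξ₂) * WW 0 1) by push_cast; ring]
    exact inner_bd vD d R N Cw _ _ _ _ hd hN hCw hz2 (norm_expE' ω T) (hF 0 1) (hW 0 1)

lemma det_one (ω R vD ξ₁ ξ₂ : ℝ) (U : ℝ → Matrix (Fin 2) (Fin 2) ℂ)
    (hU : IsFundamentalSolution (Dhat ω R vD ξ₁ ξ₂) U) (T : ℝ) :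
    U T 0 0 * U T 1 1 - U T 0 1 * U T 1 0 = 1 := by
  have hf : ∀ t : ℝ, HasDerivAt (fun t : ℝ => U t 0 0 * U t 1 1 - U t 0 1 * U t 1 0) 0 t := by
    intro t
    have h := ((hU.2 t 0 0).mul (hU.2 t 1 1)).sub ((hU.2 t 0 1).mul (hU.2 t 1 0))
    convert h using 1
    · rfl
    · rfl
    rw [rhs00, rhs01, rhs10, rhs11]
    ring
  have hc : U T 0 0 * U T 1 1 - U T 0 1 * U T 1 0
      = U 0 0 0 * U 0 1 1 - U 0 0 1 * U 0 1 0 :=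
    is_const_of_deriv_eq_zero (fun t => (hf t).differentiableAt)
      (fun t => (hf t).deriv) T 0
  rw [hc, hU.1]
  simp [Matrix.one_apply]


/-- **Floquet-multiplier gap for the forced Dirac system at small momenta**
(Proposition 3.4, Fourier-side form): if `R v_D ≠ 0` and `R²v_D² < 2ω²`, then there exist
`d₀ > 0` and `g > 0` such that for every `ξ` with `‖ξ‖ ≤ d₀`, the spectrum of the
monodromy matrix `U(T_per)` contains no point of the arc `{e^{iy} : |y| ≤ g}`. -/
theorem floquet_multiplier_gap
    (ω R vD : ℝ) (hω : 0 < ω) (hRvD : R * vD ≠ 0) (hsmall : R ^ 2 * vD ^ 2 < 2 * ω ^ 2)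
    (Tper : ℝ) (hTper : Tper = 2 * Real.pi / ω) :
    ∃ d₀ > (0 : ℝ), ∃ g > (0 : ℝ),
      ∀ ξ₁ ξ₂ : ℝ, Real.sqrt (ξ₁ ^ 2 + ξ₂ ^ 2) ≤ d₀ →
        ∀ U : ℝ → Matrix (Fin 2) (Fin 2) ℂ,
          IsFundamentalSolution (Dhat ω R vD ξ₁ ξ₂) U →
          ∀ y : ℝ, |y| ≤ g →
            Complex.exp (Complex.I * y) ∉ spectrum ℂ (U Tper) := by
  have hR0 : R ≠ 0 := fun h => hRvD (by rw [h, zero_mul])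
  have hvD0 : vD ≠ 0 := fun h => hRvD (by rw [h, mul_zero])
  set b := vD * R with hbdef
  have hb0 : b ≠ 0 := mul_ne_zero hvD0 hR0
  have hb2 : 0 < b^2 := by positivity
  set Ω := Real.sqrt (ω^2/4 + b^2) with hΩdef
  have hΩpos : 0 < Ω := Real.sqrt_pos.2 (by positivity)
  have hΩsq : Ω^2 = ω^2/4 + b^2 := Real.sq_sqrt (by positivity)
  have hTpos : 0 < Tper := by rw [hTper]; positivity
  have hπ := Real.pi_pos
  -- strict location of τ = Ω * Tper in (π, 3π)
  have hΩgt : ω/2 < Ω := by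
    rw [hΩdef]
    rw [show ω^2/4 + b^2 = (ω/2)^2 + b^2 by ring]
    have := Real.lt_sqrt (by positivity : (0:ℝ) ≤ ω/2) (y := (ω/2)^2 + b^2)
    rw [this]
    linarith
  have hΩlt : Ω < 3*ω/2 := by
    rw [hΩdef]
    have h3 : (0:ℝ) < 3*ω/2 := by positivity
    rw [Real.sqrt_lt' h3]
    have hbsq : b^2 = R^2 * vD^2 := by rw [hbdef]; ring
    nlinarith
  have hτlo : Real.pi < Ω * Tper := by
    rw [hTper]
    rw [show Ω * (2*Real.pi/ω) = (Ω * (2*Real.pi))/ω by ring]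
    rw [lt_div_iff₀ hω]
    nlinarith
  have hτhi : Ω * Tper < 3 * Real.pi := by
    rw [hTper]
    rw [show Ω * (2*Real.pi/ω) = (Ω * (2*Real.pi))/ω by ring]
    rw [div_lt_iff₀ hω]
    nlinarith
  have hcosτ : -1 < Real.cos (Ω * Tper) := by
    rcases lt_or_eq_of_le (Real.neg_one_le_cos (Ω * Tper)) with h | h
    · exact h
    · exfalso
      obtain ⟨k, hk⟩ := Real.cos_eq_neg_one_iff.1 h.symm
      have h2π : (0:ℝ) < 2*Real.pi := by positivity
      have hk0 : (0:ℝ) < (k:ℝ) * (2*Real.pi) := by linarith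
      have hk1 : (k:ℝ) * (2*Real.pi) < 2*Real.pi := by linarith
      have hk0' : (0:ℝ) < (k:ℝ) := by
        by_contra hcon
        push_neg at hcon
        nlinarith
      have hk0'' : (0:ℤ) < k := by exact_mod_cast hk0'
      have : (1:ℝ) ≤ (k:ℝ) := by exact_mod_cast hk0''
      nlinarith
  set ε₀ := 2 * (1 + Real.cos (Ω * Tper)) with hε₀def
  have hε₀ : 0 < ε₀ := by rw [hε₀def]; linarith
  -- Gronwall constants
  set K := |vD| * (1 + |R|) with hKdef
  have hK0 : 0 < K := by
    rw [hKdef]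
    have : 0 < |vD| := abs_pos.2 hvD0
    nlinarith [abs_nonneg R]
  set Cw := 1 + (ω/2 + |b|)/Ω with hCwdef
  have hCw0 : 0 ≤ Cw := by rw [hCwdef]; positivity
  have hexpK : 0 ≤ Real.exp (K * Tper) - 1 := by
    have : (1:ℝ) ≤ Real.exp (K * Tper) := Real.one_le_exp (by positivity)
    linarith
  set CC := |vD| * Cw * ((Real.exp (K * Tper) - 1)/K) with hCCdef
  have hCC0 : 0 ≤ CC := by
    rw [hCCdef]
    have : 0 ≤ (Real.exp (K * Tper) - 1)/K := by positivity
    positivity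
  set d₀ := min 1 (ε₀/(8*(CC+1))) with hd₀def
  have hd₀pos : 0 < d₀ := by
    rw [hd₀def]
    apply lt_min one_pos
    positivity
  have hd₀1 : d₀ ≤ 1 := min_le_left _ _
  have hd₀CC : CC * d₀ ≤ ε₀/8 := by
    have h1 : d₀ ≤ ε₀/(8*(CC+1)) := min_le_right _ _
    have h2 : CC * d₀ ≤ CC * (ε₀/(8*(CC+1))) := by
      apply mul_le_mul_of_nonneg_left h1 hCC0
    refine le_trans h2 ?_
    rw [show CC * (ε₀/(8*(CC+1))) = (CC*ε₀)/(8*(CC+1)) by ring]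
    rw [div_le_div_iff₀ (by positivity) (by norm_num : (0:ℝ) < 8)]
    nlinarith
  refine ⟨d₀, hd₀pos, ?_⟩
  -- pick g by continuity of cos at 0
  obtain ⟨g₁, hg₁pos, hg₁⟩ := Metric.continuousAt_iff.1
    (Real.continuous_cos.continuousAt (x := 0)) (ε₀/8) (by positivity)
  refine ⟨g₁/2, by positivity, ?_⟩
  intro ξ₁ ξ₂ hξ U hU y hy
  -- Gronwall comparison with the explicit solution
  set W : ℝ → Matrix (Fin 2) (Fin 2) ℂ := Wsol ω b Ω with hWdef
  set F : ℝ → (Fin 2 → Fin 2 → ℂ) := fun t i j => U t i j - W t i j with hFdef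
  set F' : ℝ → (Fin 2 → Fin 2 → ℂ) := fun t i j =>
    ((-Complex.I) • (Dhat ω R vD ξ₁ ξ₂ t * U t)) i j
      - ((-Complex.I) • (Dhat ω R vD 0 0 t * W t)) i j with hF'def
  have hFd : ∀ t, HasDerivAt F (F' t) t := by
    intro t
    apply hasDerivAt_pi.2
    intro i
    apply hasDerivAt_pi.2
    intro j
    exact (hU.2 t i j).sub (Wsol_deriv ω R vD b Ω hbdef hΩpos.ne' hΩsq t i j)
  have hFcont : Continuous F := continuous_iff_continuousAt.2 fun t => (hFd t).continuousAt
  have hF0 : F 0 = 0 := by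
    funext i j
    show U 0 i j - W 0 i j = 0
    rw [hU.1, hWdef, Wsol_zero]
    simp
  set ε := (|vD| * d₀) * Cw with hεdef
  have hε0 : 0 ≤ ε := by rw [hεdef]; positivity
  have hbound : ∀ t ∈ Set.Ico (0:ℝ) Tper, ‖F' t‖ ≤ K * ‖F t‖ + ε := by
    intro t _
    have hKnn : 0 ≤ K * ‖F t‖ + ε := by positivity
    rw [pi_norm_le_iff_of_nonneg hKnn]
    intro i
    rw [pi_norm_le_iff_of_nonneg hKnn]
    intro j
    have hWb : ∀ i j, ‖W t i j‖ ≤ Cw := fun i j => Wsol_bound ω b Ω hω.le hΩpos t i j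
    have hFb : ∀ i j, ‖U t i j - W t i j‖ ≤ ‖F t‖ := by
      intro i j
      calc ‖U t i j - W t i j‖ = ‖F t i j‖ := rfl
        _ ≤ ‖F t i‖ := norm_le_pi_norm (F t i) j
        _ ≤ ‖F t‖ := norm_le_pi_norm (F t) i
    have hEB := entry_bound ω R vD ξ₁ ξ₂ t (U t) (W t) d₀ Cw (‖F t‖)
      hd₀pos.le hCw0 (norm_nonneg _) hξ hWb hFb i j
    refine le_trans hEB ?_
    have hmono : |vD| * (d₀ + |R|) ≤ K := by
      rw [hKdef]
      have : d₀ + |R| ≤ 1 + |R| := by linarith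
      exact mul_le_mul_of_nonneg_left this (abs_nonneg vD)
    have := mul_le_mul_of_nonneg_right hmono (norm_nonneg (F t))
    rw [hεdef]
    nlinarith [norm_nonneg (F t)]
  have hgron := norm_le_gronwallBound_of_norm_deriv_right_le (δ := 0)
    (hFcont.continuousOn) (fun x _ => (hFd x).hasDerivWithinAt)
    (by simp [hF0]) hbound Tper (Set.right_mem_Icc.2 hTpos.le)
  rw [gronwallBound_of_K_ne_0 hK0.ne'] at hgron
  have hFT : ‖F Tper‖ ≤ CC * d₀ := by
    refine le_trans hgron ?_
    simp only [sub_zero, norm_zero, zero_mul, zero_add]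
    rw [hCCdef, hεdef]
    apply le_of_eq
    field_simp
  -- trace estimate
  have htrW := Wsol_trace ω b Ω Tper hω hTper
  have htr : ‖(U Tper 0 0 + U Tper 1 1) - ((-(2 * Real.cos (Ω * Tper)) : ℝ) : ℂ)‖
      ≤ 2 * (CC * d₀) := by
    have hsum : (U Tper 0 0 + U Tper 1 1) - ((-(2 * Real.cos (Ω * Tper)) : ℝ) : ℂ)
        = F Tper 0 0 + F Tper 1 1 := by
      rw [← htrW]
      show _ = (U Tper 0 0 - W Tper 0 0) + (U Tper 1 1 - W Tper 1 1)
      rw [hWdef]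
      ring
    rw [hsum]
    refine le_trans (norm_add_le _ _) ?_
    have h00 : ‖F Tper 0 0‖ ≤ ‖F Tper‖ :=
      le_trans (norm_le_pi_norm (F Tper 0) 0) (norm_le_pi_norm (F Tper) 0)
    have h11 : ‖F Tper 1 1‖ ≤ ‖F Tper‖ :=
      le_trans (norm_le_pi_norm (F Tper 1) 1) (norm_le_pi_norm (F Tper) 1)
    linarith
  -- cos y estimate
  have hcosy : |Real.cos y - 1| < ε₀/8 := by
    have hd : dist y 0 < g₁ := by
      rw [Real.dist_eq, sub_zero]
      calc |y| ≤ g₁/2 := hy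
        _ < g₁ := by linarith
    have h := hg₁ hd
    rwa [Real.dist_eq, Real.cos_zero] at h
  -- spectrum exclusion
  have hdet := det_one ω R vD ξ₁ ξ₂ U hU Tper
  apply spec_aux (U Tper) hdet _ (Complex.exp_ne_zero _)
  have hlam : Complex.exp (Complex.I * y) + (Complex.exp (Complex.I * y))⁻¹
      = ((2 * Real.cos y : ℝ) : ℂ) := by
    rw [← Complex.exp_neg]
    rw [show Complex.I * (y:ℂ) = (y:ℂ) * Complex.I by ring]
    rw [show -((y:ℂ) * Complex.I) = (-(y:ℂ)) * Complex.I by ring]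
    rw [Complex.exp_mul_I, Complex.exp_mul_I, Complex.cos_neg, Complex.sin_neg]
    rw [← Complex.ofReal_cos]
    push_cast
    ring
  rw [hlam]
  intro heq
  have habs : ‖((2*Real.cos y : ℝ) : ℂ) - ((-(2 * Real.cos (Ω * Tper)) : ℝ) : ℂ)‖
      ≤ 2*(CC*d₀) := by rw [← heq]; exact htr
  rw [show ((2*Real.cos y : ℝ) : ℂ) - ((-(2 * Real.cos (Ω * Tper)) : ℝ) : ℂ)
      = (((2*Real.cos y + 2*Real.cos (Ω*Tper)) : ℝ) : ℂ) by push_cast; ring] at habs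
  rw [Complex.norm_real, Real.norm_eq_abs] at habs
  have h8 : 2*(CC*d₀) ≤ ε₀/4 := by linarith [hd₀CC]
  have hball := abs_le.1 (le_trans habs h8)
  have hbcy := abs_lt.1 hcosy
  have hε₀' : ε₀ = 2*(1 + Real.cos (Ω*Tper)) := hε₀def
  linarith [hball.1, hball.2, hbcy.1, hbcy.2]
end
end

section
/- Uniform resolvent-type lower bound near the gap (quantitative form of Proposition 3.4): Let ω > 0 and R, v_D ∈ ℝ with R v_D ≠ 0 and R² v_D² < 2ω², and set T_per = 2π/ω. Then there exist d₀ > 0, g > 0 and c > 0 such that for every ξ ∈ ℝ² with ‖ξ‖ ≤ d₀, every fundamental solution U of i U′(T) = D̂(T; ξ) U(T), every y ∈ ℝ with |y| ≤ g, and every vector w ∈ ℂ², one has ‖U(T_per) w − e^{iy} w‖ ≥ c ‖w‖. -/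
open Matrix Complex

noncomputable section

lemma unitary_of_fund (ω R vD ξ₁ ξ₂ : ℝ) (U : ℝ → Matrix (Fin 2) (Fin 2) ℂ)
    (hU : IsFundamentalSolution (Dhat ω R vD ξ₁ ξ₂) U) (T : ℝ) :
    (U T)ᴴ * U T = 1 := by
  obtain ⟨h0, hD⟩ := hU
  have key : ∀ i j : Fin 2, ((U T)ᴴ * U T) i j = ((U 0)ᴴ * U 0) i j := by
    intro i j
    have hderiv : ∀ t : ℝ, HasDerivAt (fun s : ℝ => ((U s)ᴴ * U s) i j) 0 t := by
      intro t
      have h1 : HasDerivAt (fun s : ℝ => ∑ k : Fin 2, star (U s k i) * U s k j)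
          (∑ k : Fin 2, (star (((-Complex.I) • (Dhat ω R vD ξ₁ ξ₂ t * U t)) k i) * U t k j
            + star (U t k i) * (((-Complex.I) • (Dhat ω R vD ξ₁ ξ₂ t * U t)) k j))) t := by
        apply HasDerivAt.fun_sum
        intro k _
        exact ((hD t k i).star.mul (hD t k j))
      have h2 : (∑ k : Fin 2, (star (((-Complex.I) • (Dhat ω R vD ξ₁ ξ₂ t * U t)) k i) * U t k j
            + star (U t k i) * (((-Complex.I) • (Dhat ω R vD ξ₁ ξ₂ t * U t)) k j))) = 0 := by
        fin_cases i <;> fin_cases j <;>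
        · simp only [Dhat, Matrix.smul_apply, Matrix.mul_apply, Fin.sum_univ_two,
            Matrix.cons_val', Matrix.cons_val_zero, Matrix.cons_val_one, Matrix.head_cons,
            Matrix.head_fin_const, Matrix.empty_val', Matrix.cons_val_fin_one,
            Matrix.of_apply, smul_eq_mul, star_mul', star_add, star_sub, RCLike.star_def,
            _root_.map_mul, _root_.map_add, map_sub, _root_.map_neg, map_zero,
            Complex.conj_ofReal, Complex.conj_I, ← Complex.exp_conj]
          ring
      rw [h2] at h1
      have heq : (fun s : ℝ => ((U s)ᴴ * U s) i j)
          = fun s : ℝ => ∑ k : Fin 2, star (U s k i) * U s k j := by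
        funext s
        simp [Matrix.mul_apply, Matrix.conjTranspose_apply]
      rw [heq]
      exact h1
    exact is_const_of_deriv_eq_zero (fun x => (hderiv x).differentiableAt)
      (fun x => (hderiv x).deriv) T 0
  have h3 : (U T)ᴴ * U T = (U 0)ᴴ * U 0 := by
    ext i j; exact key i j
  rw [h3, h0]
  simp


lemma entry_abs_le_one {U : Matrix (Fin 2) (Fin 2) ℂ} (h : Uᴴ * U = 1) (i j : Fin 2) :
    ‖U i j‖ ≤ 1 := by
  have h1 : (Uᴴ * U) j j = 1 := by rw [h]; simp
  have h2 : Complex.normSq (U 0 j) + Complex.normSq (U 1 j) = 1 := by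
    have h3 := congrArg Complex.re h1
    simpa [Matrix.mul_apply, Fin.sum_univ_two, Matrix.conjTranspose_apply,
      Complex.normSq_eq_conj_mul_self, Complex.normSq_apply] using h3
  have h4 : Complex.normSq (U i j) ≤ 1 := by
    obtain rfl | rfl : i = 0 ∨ i = 1 := by omega
    · nlinarith [Complex.normSq_nonneg (U 1 j)]
    · nlinarith [Complex.normSq_nonneg (U 0 j)]
  rw [Complex.norm_def]
  calc Real.sqrt (Complex.normSq (U i j)) ≤ Real.sqrt 1 := Real.sqrt_le_sqrt h4
  _ = 1 := Real.sqrt_one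

lemma abs_xi (ξ₁ ξ₂ : ℝ) : ‖(ξ₁ : ℂ) + Complex.I * ξ₂‖ = Real.sqrt (ξ₁^2 + ξ₂^2) := by
  have hmk : (ξ₁ : ℂ) + Complex.I * ξ₂ = Complex.mk ξ₁ ξ₂ := by
    apply Complex.ext <;> simp
  rw [hmk, Complex.norm_def, Complex.normSq_mk]
  ring_nf

lemma abs_xi' (ξ₁ ξ₂ : ℝ) : ‖(ξ₁ : ℂ) - Complex.I * ξ₂‖ = Real.sqrt (ξ₁^2 + ξ₂^2) := by
  have hmk : (ξ₁ : ℂ) - Complex.I * ξ₂ = Complex.mk ξ₁ (-ξ₂) := by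
    apply Complex.ext <;> simp
  rw [hmk, Complex.norm_def, Complex.normSq_mk]
  ring_nf
def U0 (ω R vD E : ℝ) (T : ℝ) : Matrix (Fin 2) (Fin 2) ℂ :=
  !![Complex.exp (Complex.I * ω * T / 2) *
       ((Real.cos (E * T) : ℂ) - Complex.I * (Real.sin (E * T) : ℂ) * ((ω / (2 * E) : ℝ) : ℂ)),
     Complex.exp (Complex.I * ω * T / 2) *
       (-(Complex.I * (Real.sin (E * T) : ℂ) * ((R * vD / E : ℝ) : ℂ)));
     Complex.exp (-(Complex.I * ω * T / 2)) *
       (-(Complex.I * (Real.sin (E * T) : ℂ) * ((R * vD / E : ℝ) : ℂ))),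
     Complex.exp (-(Complex.I * ω * T / 2)) *
       ((Real.cos (E * T) : ℂ) + Complex.I * (Real.sin (E * T) : ℂ) * ((ω / (2 * E) : ℝ) : ℂ))]

-- derivative helpers
lemma hd_exp (a : ℂ) (t : ℝ) :
    HasDerivAt (fun s : ℝ => Complex.exp (a * s)) (a * Complex.exp (a * t)) t := by
  have h : HasDerivAt (fun z : ℂ => Complex.exp (a * z)) (a * Complex.exp (a * t)) (t : ℂ) := by
    have h1 : HasDerivAt (fun z : ℂ => a * z) a (t : ℂ) := by
      simpa using (hasDerivAt_id ((t : ℝ) : ℂ)).const_mul a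
    simpa [mul_comm, Function.comp_def] using (Complex.hasDerivAt_exp (a * t)).comp (t : ℂ) h1
  exact h.comp_ofReal

lemma hd_cos (E t : ℝ) :
    HasDerivAt (fun s : ℝ => ((Real.cos (E * s) : ℝ) : ℂ))
      ((-(E * Real.sin (E * t)) : ℝ) : ℂ) t := by
  have h1 : HasDerivAt (fun s : ℝ => Real.cos (E * s)) (-(E * Real.sin (E * t))) t := by
    have h2 : HasDerivAt (fun s : ℝ => E * s) E t := by
      simpa using (hasDerivAt_id t).const_mul E
    simpa [mul_comm, Function.comp_def] using (Real.hasDerivAt_cos (E * t)).comp t h2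
  exact h1.ofReal_comp

lemma hd_sin (E t : ℝ) :
    HasDerivAt (fun s : ℝ => ((Real.sin (E * s) : ℝ) : ℂ))
      ((E * Real.cos (E * t) : ℝ) : ℂ) t := by
  have h1 : HasDerivAt (fun s : ℝ => Real.sin (E * s)) (E * Real.cos (E * t)) t := by
    have h2 : HasDerivAt (fun s : ℝ => E * s) E t := by
      simpa using (hasDerivAt_id t).const_mul E
    simpa [mul_comm, Function.comp_def] using (Real.hasDerivAt_sin (E * t)).comp t h2
  exact h1.ofReal_comp

set_option maxHeartbeats 2000000 in
lemma U0_fund (ω R vD E : ℝ) (hE : E ^ 2 = ω ^ 2 / 4 + R ^ 2 * vD ^ 2) (hE0 : E ≠ 0) :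
    IsFundamentalSolution (Dhat ω R vD 0 0) (U0 ω R vD E) := by
  constructor
  · ext i j
    fin_cases i <;> fin_cases j <;> simp [U0]
  · intro T i j
    have hp : HasDerivAt (fun s : ℝ => Complex.exp (Complex.I * ω * s / 2))
        ((Complex.I * ω / 2) * Complex.exp (Complex.I * ω * T / 2)) T := by
      have := hd_exp (Complex.I * ω / 2) T
      convert this using 2 <;> ring_nf
    have hq : HasDerivAt (fun s : ℝ => Complex.exp (-(Complex.I * ω * s / 2)))
        ((-(Complex.I * ω / 2)) * Complex.exp (-(Complex.I * ω * T / 2))) T := by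
      have := hd_exp (-(Complex.I * ω / 2)) T
      convert this using 2 <;> ring_nf
    have hsq : Complex.exp (Complex.I * ω * T) =
        Complex.exp (Complex.I * ω * T / 2) * Complex.exp (Complex.I * ω * T / 2) := by
      rw [← Complex.exp_add]; ring_nf
    have hsq' : Complex.exp (-(Complex.I * ω * T)) =
        Complex.exp (-(Complex.I * ω * T / 2)) * Complex.exp (-(Complex.I * ω * T / 2)) := by
      rw [← Complex.exp_add]; ring_nf
    have hEc : ((E : ℂ)) ^ 2 = (ω : ℂ) ^ 2 / 4 + (R : ℂ) ^ 2 * (vD : ℂ) ^ 2 := by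
      exact_mod_cast congrArg (fun x : ℝ => (x : ℂ)) hE
    have hpp : Complex.exp (Complex.I*↑ω*↑T*(1/2)) * Complex.exp (Complex.I*↑ω*↑T*(-1/2)) = 1 := by
      rw [← Complex.exp_add]; ring_nf; exact Complex.exp_zero
    have hI : (Complex.I) ^ 2 = -1 := Complex.I_sq
    have hE0' : (E : ℂ) ≠ 0 := by exact_mod_cast hE0
    fin_cases i <;> fin_cases j
    · -- entry 0 0
      have h := hp.fun_mul ((hd_cos E T).fun_sub
        (((hd_sin E T).const_mul Complex.I).mul_const ((ω / (2 * E) : ℝ) : ℂ)))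
      have hfun : (fun t : ℝ => U0 ω R vD E t 0 0) = fun s : ℝ =>
          Complex.exp (Complex.I * ω * s / 2) *
            ((Real.cos (E * s) : ℂ) - Complex.I * (Real.sin (E * s) : ℂ) * ((ω / (2 * E) : ℝ) : ℂ)) := by
        funext s; simp [U0]
      rw [show ((0 : Fin 2)) = ⟨0,by norm_num⟩ from rfl] at *
      rw [hfun]
      refine h.congr_deriv ?_; symm
      simp only [Dhat, U0, Matrix.smul_apply, Matrix.mul_apply, Fin.sum_univ_two,
        Matrix.cons_val', Matrix.cons_val_zero, Matrix.cons_val_one, Matrix.head_cons,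
        Matrix.head_fin_const, Matrix.empty_val', Matrix.cons_val_fin_one, Matrix.of_apply,
        smul_eq_mul]
      rw [hsq]
      push_cast
      field_simp [hE0']
      ring_nf
      linear_combination ((vD:ℂ)^2*(R:ℂ)^2*Complex.exp (Complex.I*↑ω*↑T*(1/2))^2*Complex.exp (Complex.I*↑ω*↑T*(-1/2))*(E:ℂ)^2*Complex.sin (↑T*↑E)*8 + (ω:ℂ)^2*Complex.exp (Complex.I*↑ω*↑T*(1/2))*(E:ℂ)^2*Complex.sin (↑T*↑E)*2) * hI + (-((vD:ℂ)^2*(R:ℂ)^2*Complex.exp (Complex.I*↑ω*↑T*(1/2))*(E:ℂ)^2*Complex.sin (↑T*↑E)*8)) * hpp + (8*Complex.exp (Complex.I*↑ω*↑T*(1/2))*(E:ℂ)^2*Complex.sin (↑T*↑E)) * hEc + (4*(vD:ℂ)^2*Complex.exp (Complex.I*↑ω*↑T*(1/2))^2*Complex.sin (↑T*↑E)*(R:ℂ)^2*Complex.exp (Complex.I*↑ω*↑T*(-1/2)) - 8*(vD:ℂ)^2*Complex.exp (Complex.I*↑ω*↑T*(1/2))^2*Complex.sin (↑T*↑E)*(R:ℂ)^2*Complex.exp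 (Complex.I*↑ω*↑T*(-1/2))*(E:ℂ)^2 - 2*Complex.exp (Complex.I*↑ω*↑T*(1/2))*Complex.sin (↑T*↑E)*(E:ℂ)^2*(ω:ℂ)^2 + Complex.exp (Complex.I*↑ω*↑T*(1/2))*Complex.sin (↑T*↑E)*(ω:ℂ)^2) * hI + (Complex.exp (Complex.I*↑ω*↑T*(1/2))*Complex.sin (↑T*↑E)*(-4*(vD:ℂ)^2*(R:ℂ)^2 + 8*(vD:ℂ)^2*(R:ℂ)^2*(E:ℂ)^2)) * hpp + (Complex.exp (Complex.I*↑ω*↑T*(1/2))*Complex.sin (↑T*↑E)*(4 - 8*(E:ℂ)^2)) * hEc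
    · -- entry 0 1
      have h := hp.fun_mul ((((hd_sin E T).const_mul Complex.I).mul_const ((R * vD / E : ℝ) : ℂ)).fun_neg)
      have hfun : (fun t : ℝ => U0 ω R vD E t 0 1) = fun s : ℝ =>
          Complex.exp (Complex.I * ω * s / 2) *
            (-(Complex.I * (Real.sin (E * s) : ℂ) * ((R * vD / E : ℝ) : ℂ))) := by
        funext s; simp [U0]
      rw [show ((0 : Fin 2)) = ⟨0,by norm_num⟩ from rfl, show ((1 : Fin 2)) = ⟨1,by norm_num⟩ from rfl] at *
      rw [hfun]
      refine h.congr_deriv ?_; symm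
      simp only [Dhat, U0, Matrix.smul_apply, Matrix.mul_apply, Fin.sum_univ_two,
        Matrix.cons_val', Matrix.cons_val_zero, Matrix.cons_val_one, Matrix.head_cons,
        Matrix.head_fin_const, Matrix.empty_val', Matrix.cons_val_fin_one, Matrix.of_apply,
        smul_eq_mul]
      rw [hsq]
      push_cast
      field_simp [hE0']
      ring_nf
      linear_combination (Complex.exp (Complex.I*↑ω*↑T*(1/2)) * (-(Complex.I*(vD:ℂ)*(R:ℂ)*(E:ℂ)^3*Complex.cos (↑T*↑E)*4) - Complex.I^2*(vD:ℂ)*(R:ℂ)*(ω:ℂ)*(E:ℂ)^2*Complex.sin (↑T*↑E)*2)) * hpp + (-Complex.exp (Complex.I*↑ω*↑T*(1/2))*((vD:ℂ)*Complex.I*(ω:ℂ)*Complex.sin (↑T*↑E)*(R:ℂ) - 4*(vD:ℂ)*Complex.I*(R:ℂ)*(E:ℂ)^3*Complex.cos (↑T*↑E) - 2*(vD:ℂ)*Complex.I^2*(ω:ℂ)*Complex.sin (↑T*↑E)*(R:ℂ)*(E:ℂ)^2 + 2*(vD:ℂ)*(R:ℂ)*(E:ℂ)*Complex.cos (↑T*↑E)))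 * hpp
    · -- entry 1 0
      have h := hq.fun_mul ((((hd_sin E T).const_mul Complex.I).mul_const ((R * vD / E : ℝ) : ℂ)).fun_neg)
      have hfun : (fun t : ℝ => U0 ω R vD E t 1 0) = fun s : ℝ =>
          Complex.exp (-(Complex.I * ω * s / 2)) *
            (-(Complex.I * (Real.sin (E * s) : ℂ) * ((R * vD / E : ℝ) : ℂ))) := by
        funext s; simp [U0]
      rw [show ((0 : Fin 2)) = ⟨0,by norm_num⟩ from rfl, show ((1 : Fin 2)) = ⟨1,by norm_num⟩ from rfl] at *
      rw [hfun]
      refine h.congr_deriv ?_; symm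
      simp only [Dhat, U0, Matrix.smul_apply, Matrix.mul_apply, Fin.sum_univ_two,
        Matrix.cons_val', Matrix.cons_val_zero, Matrix.cons_val_one, Matrix.head_cons,
        Matrix.head_fin_const, Matrix.empty_val', Matrix.cons_val_fin_one, Matrix.of_apply,
        smul_eq_mul]
      rw [hsq']
      push_cast
      field_simp [hE0']
      ring_nf
      linear_combination (Complex.exp (Complex.I*↑ω*↑T*(-1/2)) * (-(Complex.I*(vD:ℂ)*(R:ℂ)*(E:ℂ)^3*Complex.cos (↑T*↑E)*4) + Complex.I^2*(vD:ℂ)*(R:ℂ)*(ω:ℂ)*(E:ℂ)^2*Complex.sin (↑T*↑E)*2)) * hpp + (Complex.exp (Complex.I*↑ω*↑T*(-1/2))*((vD:ℂ)*Complex.I*(R:ℂ)*(ω:ℂ)*Complex.sin (↑T*↑E) + 4*(vD:ℂ)*Complex.I*(R:ℂ)*(E:ℂ)^3*Complex.cos (↑T*↑E) - 2*(vD:ℂ)*Complex.I^2*(R:ℂ)*(ω:ℂ)*Complex.sin (↑T*↑E)*(E:ℂ)^2 - 2*(vD:ℂ)*(R:ℂ)*(E:ℂ)*Complex.cos (↑T*↑E)))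 * hpp
    · -- entry 1 1
      have h := hq.fun_mul ((hd_cos E T).fun_add
        (((hd_sin E T).const_mul Complex.I).mul_const ((ω / (2 * E) : ℝ) : ℂ)))
      have hfun : (fun t : ℝ => U0 ω R vD E t 1 1) = fun s : ℝ =>
          Complex.exp (-(Complex.I * ω * s / 2)) *
            ((Real.cos (E * s) : ℂ) + Complex.I * (Real.sin (E * s) : ℂ) * ((ω / (2 * E) : ℝ) : ℂ)) := by
        funext s; simp [U0]
      rw [show ((1 : Fin 2)) = ⟨1,by norm_num⟩ from rfl] at *
      rw [hfun]
      refine h.congr_deriv ?_; symm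
      simp only [Dhat, U0, Matrix.smul_apply, Matrix.mul_apply, Fin.sum_univ_two,
        Matrix.cons_val', Matrix.cons_val_zero, Matrix.cons_val_one, Matrix.head_cons,
        Matrix.head_fin_const, Matrix.empty_val', Matrix.cons_val_fin_one, Matrix.of_apply,
        smul_eq_mul]
      rw [hsq']
      push_cast
      field_simp [hE0']
      ring_nf
      linear_combination ((vD:ℂ)^2*(R:ℂ)^2*Complex.exp (Complex.I*↑ω*↑T*(-1/2))^2*Complex.exp (Complex.I*↑ω*↑T*(1/2))*(E:ℂ)^2*Complex.sin (↑T*↑E)*8 + (ω:ℂ)^2*Complex.exp (Complex.I*↑ω*↑T*(-1/2))*(E:ℂ)^2*Complex.sin (↑T*↑E)*2) * hI + (-((vD:ℂ)^2*(R:ℂ)^2*Complex.exp (Complex.I*↑ω*↑T*(-1/2))*(E:ℂ)^2*Complex.sin (↑T*↑E)*8)) * hpp + (8*Complex.exp (Complex.I*↑ω*↑T*(-1/2))*(E:ℂ)^2*Complex.sin (↑T*↑E)) * hEc + (4*(vD:ℂ)^2*Complex.exp (Complex.I*↑ω*↑T*(-1/2))^2*Complex.sin (↑T*↑E)*(R:ℂ)^2*Complex.exp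 (Complex.I*↑ω*↑T*(1/2)) - 8*(vD:ℂ)^2*Complex.exp (Complex.I*↑ω*↑T*(-1/2))^2*Complex.sin (↑T*↑E)*(R:ℂ)^2*Complex.exp (Complex.I*↑ω*↑T*(1/2))*(E:ℂ)^2 - 2*Complex.exp (Complex.I*↑ω*↑T*(-1/2))*Complex.sin (↑T*↑E)*(E:ℂ)^2*(ω:ℂ)^2 + Complex.exp (Complex.I*↑ω*↑T*(-1/2))*Complex.sin (↑T*↑E)*(ω:ℂ)^2) * hI + (Complex.exp (Complex.I*↑ω*↑T*(-1/2))*Complex.sin (↑T*↑E)*(-4*(vD:ℂ)^2*(R:ℂ)^2 + 8*(vD:ℂ)^2*(R:ℂ)^2*(E:ℂ)^2)) * hpp + (Complex.exp (Complex.I*↑ω*↑T*(-1/2))*Complex.sin (↑T*↑E)*(4 - 8*(E:ℂ)^2)) * hEc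

lemma entry_close (ω R vD ξ₁ ξ₂ E : ℝ) (hE : E ^ 2 = ω ^ 2 / 4 + R ^ 2 * vD ^ 2) (hE0 : E ≠ 0)
    (U : ℝ → Matrix (Fin 2) (Fin 2) ℂ) (hU : IsFundamentalSolution (Dhat ω R vD ξ₁ ξ₂) U)
    (Tp : ℝ) (hTp : 0 ≤ Tp) (i j : Fin 2) :
    ‖(((U0 ω R vD E Tp)ᴴ * U Tp) - 1) i j‖
      ≤ 2 * |vD| * Real.sqrt (ξ₁ ^ 2 + ξ₂ ^ 2) * Tp := by
  set d := Real.sqrt (ξ₁ ^ 2 + ξ₂ ^ 2) with hd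
  set W := U0 ω R vD E with hWdef
  have hW := U0_fund ω R vD E hE hE0
  have hWu : ∀ t, (W t)ᴴ * W t = 1 := unitary_of_fund ω R vD 0 0 W hW
  have hUu : ∀ t, (U t)ᴴ * U t = 1 := unitary_of_fund ω R vD ξ₁ ξ₂ U hU
  -- the derivative function
  set g : ℝ → ℂ := fun t => (-Complex.I) *
      ((star (W t 1 i) * ((vD : ℂ) * ((ξ₁ : ℂ) - Complex.I * ξ₂))) * U t 0 j
        + (star (W t 0 i) * ((vD : ℂ) * ((ξ₁ : ℂ) + Complex.I * ξ₂))) * U t 1 j) with hgdef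
  have hg : ∀ t, HasDerivAt (fun s => ((W s)ᴴ * U s) i j) (g t) t := by
    intro t
    have h1 : HasDerivAt (fun s : ℝ => ∑ k : Fin 2, star (W s k i) * U s k j)
        (∑ k : Fin 2, (star (((-Complex.I) • (Dhat ω R vD 0 0 t * W t)) k i) * U t k j
          + star (W t k i) * (((-Complex.I) • (Dhat ω R vD ξ₁ ξ₂ t * U t)) k j))) t := by
      apply HasDerivAt.fun_sum
      intro k _
      exact ((hW.2 t k i).star.mul (hU.2 t k j))
    have h2 : (∑ k : Fin 2, (star (((-Complex.I) • (Dhat ω R vD 0 0 t * W t)) k i) * U t k j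
          + star (W t k i) * (((-Complex.I) • (Dhat ω R vD ξ₁ ξ₂ t * U t)) k j))) = g t := by
      rw [hgdef]
      fin_cases i <;> fin_cases j <;>
      · simp only [Dhat, Matrix.smul_apply, Matrix.mul_apply, Fin.sum_univ_two,
          Matrix.cons_val', Matrix.cons_val_zero, Matrix.cons_val_one, Matrix.head_cons,
          Matrix.head_fin_const, Matrix.empty_val', Matrix.cons_val_fin_one,
          Matrix.of_apply, smul_eq_mul, star_mul', star_add, star_sub, RCLike.star_def,
          _root_.map_mul, _root_.map_add, map_sub, _root_.map_neg, map_zero,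
          Complex.conj_ofReal, Complex.conj_I, ← Complex.exp_conj]
        push_cast
        ring_nf
    rw [h2] at h1
    have heq : (fun s : ℝ => ((W s)ᴴ * U s) i j)
        = fun s : ℝ => ∑ k : Fin 2, star (W s k i) * U s k j := by
      funext s
      simp [Matrix.mul_apply, Matrix.conjTranspose_apply]
    rw [heq]
    exact h1
  -- bound on g
  have hterm : ∀ (z u v : ℂ), ‖u‖ ≤ 1 → ‖v‖ ≤ 1 →
      ‖star u * ((vD : ℂ) * z) * v‖ ≤ |vD| * ‖z‖ := by
    intro z u v hu hv
    rw [norm_mul, norm_mul, norm_mul, norm_star,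
      Complex.norm_real, Real.norm_eq_abs]
    have h1 : ‖u‖ * (|vD| * ‖z‖) * ‖v‖
        ≤ 1 * (|vD| * ‖z‖) * 1 := by
      gcongr <;> first | positivity | exact hu | exact hv
    linarith
  have hbound : ∀ t, ‖g t‖ ≤ 2 * |vD| * d := by
    intro t
    rw [hgdef]
    rw [norm_mul]
    have hnegI : ‖-Complex.I‖ = 1 := by simp
    rw [hnegI, one_mul]
    calc ‖(star (W t 1 i) * ((vD : ℂ) * ((ξ₁ : ℂ) - Complex.I * ξ₂))) * U t 0 j
          + (star (W t 0 i) * ((vD : ℂ) * ((ξ₁ : ℂ) + Complex.I * ξ₂))) * U t 1 j‖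
        ≤ ‖(star (W t 1 i) * ((vD : ℂ) * ((ξ₁ : ℂ) - Complex.I * ξ₂))) * U t 0 j‖
          + ‖(star (W t 0 i) * ((vD : ℂ) * ((ξ₁ : ℂ) + Complex.I * ξ₂))) * U t 1 j‖ :=
        norm_add_le _ _
      _ ≤ |vD| * ‖(ξ₁ : ℂ) - Complex.I * ξ₂‖
          + |vD| * ‖(ξ₁ : ℂ) + Complex.I * ξ₂‖ := by
        gcongr
        · exact hterm _ _ _ (entry_abs_le_one (hWu t) 1 i) (entry_abs_le_one (hUu t) 0 j)
        · exact hterm _ _ _ (entry_abs_le_one (hWu t) 0 i) (entry_abs_le_one (hUu t) 1 j)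
      _ = 2 * |vD| * d := by rw [abs_xi, abs_xi', hd]; ring
  -- continuity of g
  have hWc : ∀ k l, Continuous fun t => W t k l := by
    intro k l
    exact continuous_iff_continuousAt.mpr fun t => (hW.2 t k l).continuousAt
  have hUc : ∀ k l, Continuous fun t => U t k l := by
    intro k l
    exact continuous_iff_continuousAt.mpr fun t => (hU.2 t k l).continuousAt
  have hgc : Continuous g := by
    rw [hgdef]
    fun_prop
  -- FTC
  have hint : IntervalIntegrable g MeasureTheory.volume 0 Tp := hgc.intervalIntegrable _ _
  have heq : ∫ t in (0:ℝ)..Tp, g t = ((W Tp)ᴴ * U Tp) i j - ((W 0)ᴴ * U 0) i j :=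
    intervalIntegral.integral_eq_sub_of_hasDerivAt (fun t _ => hg t) hint
  have h0 : ((W 0)ᴴ * U 0) i j = (1 : Matrix (Fin 2) (Fin 2) ℂ) i j := by
    rw [show W 0 = (1 : Matrix (Fin 2) (Fin 2) ℂ) from hW.1, hU.1]; simp
  have habs : ‖((W Tp)ᴴ * U Tp - 1) i j‖ = ‖∫ t in (0:ℝ)..Tp, g t‖ := by
    rw [heq, h0]
    rw [Matrix.sub_apply]
  rw [habs]
  have hb2 : ‖∫ t in (0:ℝ)..Tp, g t‖ ≤ (2 * |vD| * d) * |Tp - 0| :=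
    intervalIntegral.norm_integral_le_of_norm_le_const
      (fun x _ => by exact hbound x)
  rw [sub_zero, _root_.abs_of_nonneg hTp] at hb2
  linarith


lemma norm_symm_mulVec_le (M : Matrix (Fin 2) (Fin 2) ℂ) (K : ℝ) (hK : 0 ≤ K)
    (h : ∀ i j, ‖M i j‖ ≤ K) (w : EuclideanSpace ℂ (Fin 2)) :
    ‖(WithLp.equiv 2 (Fin 2 → ℂ)).symm (M.mulVec ((WithLp.equiv 2 (Fin 2 → ℂ)) w))‖
      ≤ 2 * K * ‖w‖ := by
  have hw : ‖w‖ ^ 2 = ‖w 0‖ ^ 2 + ‖w 1‖ ^ 2 := by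
    rw [EuclideanSpace.norm_eq, Real.sq_sqrt (by positivity)]
    simp [Fin.sum_univ_two]
  have hcomp : ∀ i : Fin 2, ‖M i 0 * w 0 + M i 1 * w 1‖ ≤ K * ‖w 0‖ + K * ‖w 1‖ := by
    intro i
    calc ‖M i 0 * w 0 + M i 1 * w 1‖ ≤ ‖M i 0 * w 0‖ + ‖M i 1 * w 1‖ := norm_add_le _ _
      _ = ‖M i 0‖ * ‖w 0‖ + ‖M i 1‖ * ‖w 1‖ := by rw [norm_mul, norm_mul]
      _ ≤ K * ‖w 0‖ + K * ‖w 1‖ := by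
          gcongr <;> first
            | exact h i 0
            | exact h i 1
  rw [EuclideanSpace.norm_eq]
  have hval : ∀ i : Fin 2,
      ((WithLp.equiv 2 (Fin 2 → ℂ)).symm (M.mulVec ((WithLp.equiv 2 (Fin 2 → ℂ)) w))) i
        = M i 0 * w 0 + M i 1 * w 1 := by
    intro i
    fin_cases i <;>
    simp [Matrix.mulVec, dotProduct, Fin.sum_univ_two, WithLp.equiv_symm_apply,
      WithLp.equiv_apply]
  rw [show (2 * K * ‖w‖ : ℝ) = Real.sqrt ((2 * K * ‖w‖) ^ 2) by
    rw [Real.sqrt_sq (by positivity)]]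
  apply Real.sqrt_le_sqrt
  rw [Fin.sum_univ_two, hval 0, hval 1]
  have h0 := hcomp 0
  have h1 := hcomp 1
  have n0 := norm_nonneg (M 0 0 * w 0 + M 0 1 * w 1)
  have n1 := norm_nonneg (M 1 0 * w 0 + M 1 1 * w 1)
  have hw0 := norm_nonneg (w 0)
  have hw1 := norm_nonneg (w 1)
  nlinarith [mul_le_mul h0 h0 n0 (by positivity), mul_le_mul h1 h1 n1 (by positivity),
    mul_nonneg (mul_nonneg hK hK) (sq_nonneg (‖w 0‖ - ‖w 1‖)), hw, mul_nonneg hw0 hw1, hK]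

lemma norm_symm_mulVec_eq (a b dd : ℂ) (ρ : ℝ) (hρ : 0 ≤ ρ)
    (h1 : Complex.normSq a + Complex.normSq b = ρ ^ 2)
    (h2 : Complex.normSq b + Complex.normSq dd = ρ ^ 2)
    (h3 : a * (starRingEnd ℂ) b + b * (starRingEnd ℂ) dd = 0)
    (w : EuclideanSpace ℂ (Fin 2)) :
    ‖(WithLp.equiv 2 (Fin 2 → ℂ)).symm ((!![a, b; b, dd]).mulVec ((WithLp.equiv 2 (Fin 2 → ℂ)) w))‖
      = ρ * ‖w‖ := by
  have hval : ∀ i : Fin 2,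
      ((WithLp.equiv 2 (Fin 2 → ℂ)).symm ((!![a, b; b, dd]).mulVec ((WithLp.equiv 2 (Fin 2 → ℂ)) w))) i
        = !![a, b; b, dd] i 0 * w 0 + !![a, b; b, dd] i 1 * w 1 := by
    intro i
    fin_cases i <;>
      simp [Matrix.mulVec, dotProduct, Fin.sum_univ_two, WithLp.equiv_symm_apply,
        WithLp.equiv_apply]
  rw [EuclideanSpace.norm_eq, EuclideanSpace.norm_eq]
  rw [Fin.sum_univ_two, Fin.sum_univ_two, hval 0, hval 1]
  simp only [Matrix.cons_val', Matrix.cons_val_zero, Matrix.cons_val_one, Matrix.head_cons,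
    Matrix.head_fin_const, Matrix.empty_val', Matrix.cons_val_fin_one, Matrix.of_apply]
  have hns : ∀ z : ℂ, ‖z‖ ^ 2 = Complex.normSq z := fun z => by
    rw [Complex.sq_norm]
  have hcross : ((a * w 0) * (starRingEnd ℂ) (b * w 1)).re
      + ((b * w 0) * (starRingEnd ℂ) (dd * w 1)).re = 0 := by
    have : (a * w 0) * (starRingEnd ℂ) (b * w 1) + (b * w 0) * (starRingEnd ℂ) (dd * w 1)
        = (a * (starRingEnd ℂ) b + b * (starRingEnd ℂ) dd) * (w 0 * (starRingEnd ℂ) (w 1)) := by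
      rw [_root_.map_mul, _root_.map_mul]; ring
    have h4 := congrArg Complex.re this
    rw [h3, zero_mul, Complex.zero_re, Complex.add_re] at h4
    linarith [h4]
  have hsum : ‖a * w 0 + b * w 1‖ ^ 2 + ‖b * w 0 + dd * w 1‖ ^ 2
      = ρ ^ 2 * (‖w 0‖ ^ 2 + ‖w 1‖ ^ 2) := by
    simp only [hns, Complex.normSq_add, Complex.normSq_mul]
    linear_combination Complex.normSq (w 0) * h1 + Complex.normSq (w 1) * h2 + 2 * hcross
  rw [hsum, Real.sqrt_mul (by positivity), Real.sqrt_sq hρ]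



set_option maxHeartbeats 2000000 in
/-- **Uniform resolvent-type lower bound near the gap** (quantitative form of
Proposition 3.4): if `R v_D ≠ 0` and `R²v_D² < 2ω²`, then there exist `d₀, g, c > 0` such
that for every `ξ` with `‖ξ‖ ≤ d₀`, every fundamental solution `U` of
`i U′ = D̂(T;ξ) U`, every `y` with `|y| ≤ g` and every `w ∈ ℂ²` (Euclidean norm),
`‖U(T_per) w − e^{iy} w‖ ≥ c ‖w‖`. -/
theorem resolvent_lower_bound_near_gap
    (ω R vD : ℝ) (hω : 0 < ω) (hRvD : R * vD ≠ 0) (hsmall : R ^ 2 * vD ^ 2 < 2 * ω ^ 2)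
    (Tper : ℝ) (hTper : Tper = 2 * Real.pi / ω) :
    ∃ d₀ > (0 : ℝ), ∃ g > (0 : ℝ), ∃ c > (0 : ℝ),
      ∀ ξ₁ ξ₂ : ℝ, Real.sqrt (ξ₁ ^ 2 + ξ₂ ^ 2) ≤ d₀ →
        ∀ U : ℝ → Matrix (Fin 2) (Fin 2) ℂ,
          IsFundamentalSolution (Dhat ω R vD ξ₁ ξ₂) U →
          ∀ y : ℝ, |y| ≤ g →
            ∀ w : EuclideanSpace ℂ (Fin 2),
              c * ‖w‖ ≤
                ‖(WithLp.equiv 2 (Fin 2 → ℂ)).symm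
                    ((U Tper).mulVec ((WithLp.equiv 2 (Fin 2 → ℂ)) w)) -
                  Complex.exp (Complex.I * y) • w‖ := by
  have hπ := Real.pi_pos
  have hRvD2 : 0 < R ^ 2 * vD ^ 2 := by
    have h2 : 0 < (R * vD) * (R * vD) := mul_self_pos.mpr hRvD
    nlinarith [h2]
  set E : ℝ := Real.sqrt (ω ^ 2 / 4 + R ^ 2 * vD ^ 2) with hEdef
  have hEsq : E ^ 2 = ω ^ 2 / 4 + R ^ 2 * vD ^ 2 := Real.sq_sqrt (by positivity)
  have hEpos : 0 < E := Real.sqrt_pos.mpr (by positivity)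
  have hTpos : 0 < Tper := by rw [hTper]; positivity
  have hEl : ω / 2 < E := by
    have h1 : Real.sqrt (ω ^ 2 / 4) < E := by
      rw [hEdef]
      exact Real.sqrt_lt_sqrt (by positivity) (by linarith)
    rwa [show ω ^ 2 / 4 = (ω / 2) ^ 2 by ring, Real.sqrt_sq (by positivity)] at h1
  have hEu : E < 3 * ω / 2 := by
    have h1 : E < Real.sqrt ((3 * ω / 2) ^ 2) := by
      rw [hEdef]
      exact Real.sqrt_lt_sqrt (by positivity) (by nlinarith)
    rwa [Real.sqrt_sq (by positivity)] at h1
  set θ : ℝ := E * Tper / 2 with hθdef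
  have hθval : θ = Real.pi * E / ω := by
    rw [hθdef, hTper]; field_simp
  have hθl : Real.pi / 2 < θ := by
    rw [hθval, lt_div_iff₀ hω]; nlinarith
  have hθu : θ < 3 * Real.pi / 2 := by
    rw [hθval, div_lt_iff₀ hω]; nlinarith
  have hcosne : Real.cos θ ≠ 0 := by
    intro hc
    rw [Real.cos_eq_zero_iff] at hc
    obtain ⟨k, hk⟩ := hc
    have hk1 : (0 : ℝ) < k := by nlinarith
    have hk2 : (k : ℝ) < 1 := by nlinarith
    have : (0 : ℤ) < k := by exact_mod_cast hk1
    have : k < (1 : ℤ) := by exact_mod_cast hk2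
    omega
  set ρ : ℝ := 2 * |Real.cos θ| with hρdef
  have hρpos : 0 < ρ := by
    have := abs_pos.mpr hcosne
    rw [hρdef]; linarith
  have hρsq : ρ ^ 2 = 2 + 2 * Real.cos (E * Tper) := by
    have h2θ : E * Tper = 2 * θ := by rw [hθdef]; ring
    rw [hρdef, h2θ, mul_pow, _root_.sq_abs, Real.cos_sq]
    ring
  -- choose constants
  refine ⟨ρ / (32 * |vD| * Tper + 1), by positivity, min (ρ / 8) 1,
    lt_min (by positivity) one_pos, ρ / 2, by positivity, ?_⟩
  intro ξ₁ ξ₂ hd U hU y hy w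
  set d₀ : ℝ := ρ / (32 * |vD| * Tper + 1) with hd₀def
  set d : ℝ := Real.sqrt (ξ₁ ^ 2 + ξ₂ ^ 2) with hddef
  have hdnn : 0 ≤ d := Real.sqrt_nonneg _
  -- the explicit solution and unitarity
  have hW : IsFundamentalSolution (Dhat ω R vD 0 0) (U0 ω R vD E) :=
    U0_fund ω R vD E hEsq (ne_of_gt hEpos)
  have hWu : (U0 ω R vD E Tper)ᴴ * U0 ω R vD E Tper = 1 :=
    unitary_of_fund ω R vD 0 0 _ hW Tper
  have hWright : U0 ω R vD E Tper * (U0 ω R vD E Tper)ᴴ = 1 :=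
    mul_eq_one_comm.mp hWu
  -- the entries of U0 at Tper
  have hωT : ω * Tper = 2 * Real.pi := by rw [hTper]; field_simp
  have hωTc : ((ω : ℂ)) * (Tper : ℂ) = 2 * (Real.pi : ℂ) := by exact_mod_cast congrArg (fun x : ℝ => (x : ℂ)) hωT
  have hexp1 : Complex.exp (Complex.I * ω * Tper / 2) = -1 := by
    rw [show (Complex.I * ω * Tper / 2 : ℂ) = (Real.pi : ℂ) * Complex.I by
      linear_combination (Complex.I / 2) * hωTc]
    exact Complex.exp_pi_mul_I
  have hexp2 : Complex.exp (-(Complex.I * ω * Tper / 2)) = -1 := by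
    rw [Complex.exp_neg, hexp1]
    norm_num
  set cc : ℝ := Real.cos (E * Tper) with hccdef
  set ss : ℝ := Real.sin (E * Tper) with hssdef
  set m : ℝ := ω / (2 * E) with hmdef
  set r : ℝ := R * vD / E with hrdef
  have hmr : m ^ 2 + r ^ 2 = 1 := by
    have hE2ne : E ^ 2 ≠ 0 := pow_ne_zero 2 (ne_of_gt hEpos)
    have heq : m ^ 2 + r ^ 2 = (ω ^ 2 / 4 + R ^ 2 * vD ^ 2) / E ^ 2 := by
      rw [hmdef, hrdef]; field_simp; ring
    rw [heq, ← hEsq, div_self hE2ne]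
  have hcs : cc ^ 2 + ss ^ 2 = 1 := by
    rw [hccdef, hssdef]; exact Real.cos_sq_add_sin_sq _
  set a : ℂ := -((cc : ℂ) - Complex.I * (ss : ℂ) * (m : ℂ)) - 1 with hadef
  set b : ℂ := Complex.I * (ss : ℂ) * (r : ℂ) with hbdef
  set dd : ℂ := -((cc : ℂ) + Complex.I * (ss : ℂ) * (m : ℂ)) - 1 with hdddef
  have hA : U0 ω R vD E Tper - 1 = !![a, b; b, dd] := by
    ext i j
    fin_cases i <;> fin_cases j <;>
      simp [U0, hexp1, hexp2, hadef, hbdef, hdddef, hccdef, hssdef, hmdef, hrdef,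
        Matrix.sub_apply] <;> ring
  have h1 : Complex.normSq a + Complex.normSq b = ρ ^ 2 := by
    rw [hadef, hbdef]
    simp [Complex.normSq_apply]
    rw [hρsq]
    linear_combination hcs + ss ^ 2 * hmr
  have h2 : Complex.normSq b + Complex.normSq dd = ρ ^ 2 := by
    rw [hbdef, hdddef]
    simp [Complex.normSq_apply]
    rw [hρsq]
    linear_combination hcs + ss ^ 2 * hmr
  have h3 : a * (starRingEnd ℂ) b + b * (starRingEnd ℂ) dd = 0 := by
    rw [hadef, hbdef, hdddef]
    simp [map_sub, _root_.map_add, _root_.map_neg, _root_.map_mul, Complex.conj_ofReal,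
      Complex.conj_I]
    ring
  -- error matrix
  set En : Matrix (Fin 2) (Fin 2) ℂ := (U0 ω R vD E Tper)ᴴ * U Tper with hEndef
  have hEnbd : ∀ i j, ‖(En - 1) i j‖ ≤ 2 * |vD| * d * Tper := by
    intro i j
    exact entry_close ω R vD ξ₁ ξ₂ E hEsq (ne_of_gt hEpos) U hU Tper hTpos.le i j
  set Merr : Matrix (Fin 2) (Fin 2) ℂ := U0 ω R vD E Tper * (En - 1) with hMerrdef
  have hMbd : ∀ i j, ‖Merr i j‖ ≤ 2 * (2 * |vD| * d * Tper) := by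
    intro i j
    have hexp : Merr i j = U0 ω R vD E Tper i 0 * (En - 1) 0 j
        + U0 ω R vD E Tper i 1 * (En - 1) 1 j := by
      rw [hMerrdef, Matrix.mul_apply, Fin.sum_univ_two]
    rw [hexp]
    have e0 : ‖U0 ω R vD E Tper i 0 * (En - 1) 0 j‖ ≤ 2 * |vD| * d * Tper := by
      rw [norm_mul]
      have b1 := entry_abs_le_one hWu i 0
      have b2 := hEnbd 0 j
      calc ‖U0 ω R vD E Tper i 0‖ * ‖(En - 1) 0 j‖
          ≤ 1 * (2 * |vD| * d * Tper) :=
            mul_le_mul b1 b2 (norm_nonneg _) zero_le_one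
        _ = 2 * |vD| * d * Tper := one_mul _
    have e1 : ‖U0 ω R vD E Tper i 1 * (En - 1) 1 j‖ ≤ 2 * |vD| * d * Tper := by
      rw [norm_mul]
      have b1 := entry_abs_le_one hWu i 1
      have b2 := hEnbd 1 j
      calc ‖U0 ω R vD E Tper i 1‖ * ‖(En - 1) 1 j‖
          ≤ 1 * (2 * |vD| * d * Tper) :=
            mul_le_mul b1 b2 (norm_nonneg _) zero_le_one
        _ = 2 * |vD| * d * Tper := one_mul _
    calc ‖U0 ω R vD E Tper i 0 * (En - 1) 0 j
          + U0 ω R vD E Tper i 1 * (En - 1) 1 j‖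
        ≤ ‖U0 ω R vD E Tper i 0 * (En - 1) 0 j‖
          + ‖U0 ω R vD E Tper i 1 * (En - 1) 1 j‖ := norm_add_le _ _
      _ ≤ 2 * (2 * |vD| * d * Tper) := by linarith
  have hUdecomp : U Tper = U0 ω R vD E Tper + Merr := by
    rw [hMerrdef, Matrix.mul_sub, Matrix.mul_one, hEndef, ← Matrix.mul_assoc, hWright,
      Matrix.one_mul]
    abel
  -- vectors
  set v : Fin 2 → ℂ := (WithLp.equiv 2 (Fin 2 → ℂ)) w with hvdef
  set V1 : EuclideanSpace ℂ (Fin 2) :=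
    (WithLp.equiv 2 (Fin 2 → ℂ)).symm ((U0 ω R vD E Tper - 1).mulVec v) with hV1def
  set V2 : EuclideanSpace ℂ (Fin 2) := (1 - Complex.exp (Complex.I * y)) • w with hV2def
  set V3 : EuclideanSpace ℂ (Fin 2) :=
    (WithLp.equiv 2 (Fin 2 → ℂ)).symm (Merr.mulVec v) with hV3def
  have hsplit : (WithLp.equiv 2 (Fin 2 → ℂ)).symm ((U Tper).mulVec v)
      - Complex.exp (Complex.I * y) • w = V1 + V2 + V3 := by
    ext i
    rw [hUdecomp]
    simp only [hV1def, hV2def, hV3def, Matrix.add_mulVec, Matrix.sub_mulVec,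
      Matrix.one_mulVec, WithLp.equiv_symm_apply, PiLp.add_apply, PiLp.sub_apply,
      PiLp.smul_apply, Pi.add_apply, Pi.sub_apply, smul_eq_mul, hvdef,
      WithLp.equiv_apply]
    ring
  -- norms
  have hnV1 : ‖V1‖ = ρ * ‖w‖ := by
    rw [hV1def, hA]
    exact norm_symm_mulVec_eq a b dd ρ hρpos.le h1 h2 h3 w
  have hnV2 : ‖V2‖ ≤ (ρ / 4) * ‖w‖ := by
    rw [hV2def, norm_smul]
    have hyle : |y| ≤ 1 := le_trans hy (min_le_right _ _)
    have hyle2 : |y| ≤ ρ / 8 := le_trans hy (min_le_left _ _)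
    have habs : ‖(1 : ℂ) - Complex.exp (Complex.I * y)‖ ≤ 2 * |y| := by
      rw [← norm_neg, neg_sub]
      have hIy : ‖Complex.I * y‖ = |y| := by
        rw [norm_mul, Complex.norm_I, one_mul, Complex.norm_real, Real.norm_eq_abs]
      calc ‖Complex.exp (Complex.I * y) - 1‖
          ≤ 2 * ‖Complex.I * y‖ := Complex.norm_exp_sub_one_le (by rw [hIy]; exact hyle)
        _ = 2 * |y| := by rw [hIy]
    have : ‖(1 : ℂ) - Complex.exp (Complex.I * y)‖ ≤ ρ / 4 := by linarith
    exact mul_le_mul_of_nonneg_right this (norm_nonneg w)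
  have hnV3 : ‖V3‖ ≤ (ρ / 4) * ‖w‖ := by
    have hKnn : (0 : ℝ) ≤ 2 * (2 * |vD| * d * Tper) := by positivity
    have h4 := norm_symm_mulVec_le Merr (2 * (2 * |vD| * d * Tper)) hKnn hMbd w
    rw [hV3def]
    have hdle : d ≤ d₀ := hd
    have hkey : 2 * (2 * (2 * |vD| * d * Tper)) ≤ ρ / 4 := by
      have h5 : 8 * |vD| * Tper * d ≤ 8 * |vD| * Tper * d₀ :=
        mul_le_mul_of_nonneg_left hdle (by positivity)
      have h6 : 8 * |vD| * Tper * d₀ ≤ ρ / 4 := by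
        rw [hd₀def, ← mul_div_assoc]
        rw [div_le_div_iff₀ (by positivity) (by norm_num : (0:ℝ) < 4)]
        have hring : ρ * (32 * |vD| * Tper + 1) = 8 * |vD| * Tper * ρ * 4 + ρ := by ring
        rw [hring]
        linarith [hρpos]
      linarith
    have hwnn : (0 : ℝ) ≤ ‖w‖ := norm_nonneg w
    exact le_trans h4 (mul_le_mul_of_nonneg_right hkey hwnn)
  -- combine
  rw [hsplit]
  have t1 : ‖V1‖ ≤ ‖V1 + V2 + V3‖ + ‖V2 + V3‖ := by
    have : V1 = (V1 + V2 + V3) - (V2 + V3) := by abel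
    calc ‖V1‖ = ‖(V1 + V2 + V3) - (V2 + V3)‖ := by rw [← this]
      _ ≤ ‖V1 + V2 + V3‖ + ‖V2 + V3‖ := norm_sub_le _ _
  have t2 : ‖V2 + V3‖ ≤ ‖V2‖ + ‖V3‖ := norm_add_le _ _
  have hwnn : (0 : ℝ) ≤ ‖w‖ := norm_nonneg w
  linarith [hnV1.ge.trans t1, t2, hnV2, hnV3, hnV1]
end
end
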